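/- arXiv:1708.03237 — 4 statements merged into one kernel-verified Lean document; each statement's English description precedes it below -/
import Mathlib

section
/- Let G be a finite graph with e non-loop edges and p ∈ [0,1]. Keep each vertex independently with probability p, and call a non-loop edge of G isolated if both its endpoints are kept and each endpoint has exactly one kept neighbor (via non-loop edges). Let e^I be the number of isolated edges. Then E[(e^I)²] ≤ e²·p⁴ + e·p²; in particular, with p = r/√(2e) ≤ 1 this gives E[(e^I)²] ≤ r⁴/4 + r²/2, a bound independent of G. -/
open Filter Finset
open scoped Classical ENNReal

/-- A finite graph on vertex set `Fin n`, possibly with loops, without multiple edges. -/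
structure FinGraph where
  n : ℕ
  adj : Fin n → Fin n → Bool
  symm : ∀ i j, adj i j = adj j i

namespace FinGraph

/-- Number of vertices. -/
def v (G : FinGraph) : ℕ := G.n

/-- Number of non-loop edges. -/
def e (G : FinGraph) : ℕ :=
  ((univ : Finset (Fin G.n × Fin G.n)).filter
    (fun q => G.adj q.1 q.2 = true ∧ q.1 < q.2)).card

/-- Number of loops. -/
def loops (G : FinGraph) : ℕ :=
  ((univ : Finset (Fin G.n)).filter (fun i => G.adj i i = true)).card

/-- Degree of a vertex (number of neighbours via non-loop edges). -/
def deg (G : FinGraph) (i : Fin G.n) : ℕ :=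
  ((univ : Finset (Fin G.n)).filter (fun j => G.adj i j = true ∧ j ≠ i)).card

/-- A graph is loopless when no vertex is adjacent to itself. -/
def Loopless (G : FinGraph) : Prop := ∀ i, G.adj i i = false

/-- The induced subgraph on a set `S` of vertices. -/
def induce (G : FinGraph) (S : Finset (Fin G.n)) : FinGraph where
  n := S.card
  adj i j := G.adj (S.orderIsoOfFin rfl i).1 (S.orderIsoOfFin rfl j).1
  symm i j := G.symm _ _

/-- The graph obtained by discarding all isolated vertices (vertices in no edge,
loop or non-loop). -/
def core (G : FinGraph) : FinGraph :=
  G.induce ((univ : Finset (Fin G.n)).filter (fun i => ∃ j, G.adj i j = true))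

/-- Graph isomorphism. -/
def Iso (G H : FinGraph) : Prop :=
  ∃ eqv : Fin G.n ≃ Fin H.n, ∀ i j, G.adj i j = H.adj (eqv i) (eqv j)

/-- Average degree `d̄(G)`. -/
noncomputable def avgDeg (G : FinGraph) : ℝ :=
  (1 / (G.n : ℝ)) * ∑ i : Fin G.n, (G.deg i : ℝ)

/-- Square average degree `d²̄(G)`. -/
noncomputable def sqAvgDeg (G : FinGraph) : ℝ :=
  (1 / (G.n : ℝ)) * ∑ i : Fin G.n, (G.deg i : ℝ) ^ 2

/-- Edge density `ρ(G) = 2e(G)/v(G)²`. -/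
noncomputable def density (G : FinGraph) : ℝ :=
  2 * (G.e : ℝ) / (G.n : ℝ) ^ 2

end FinGraph

/-- Unlabeled finite graphs: isomorphism classes of finite graphs. -/
def UGraph := Quot FinGraph.Iso

/-- The isomorphism class of a finite graph. -/
def FinGraph.cls (G : FinGraph) : UGraph := Quot.mk _ G

/-- Probability that independent Bernoulli(min p 1) vertex selection picks exactly `S`. -/
noncomputable def sampleWeight (G : FinGraph) (p : ℝ) (S : Finset (Fin G.n)) : ℝ :=
  (min p 1) ^ S.card * (1 - min p 1) ^ (G.n - S.card)

/-- Law (pmf) of the `p`-sampling `S_p(G)`: keep each vertex independently with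
probability `min p 1`, take the induced subgraph, discard isolated vertices,
and pass to the isomorphism class. -/
noncomputable def pSampleLaw (G : FinGraph) (p : ℝ) : UGraph → ℝ := fun H =>
  ∑ S ∈ (univ : Finset (Fin G.n)).powerset,
    sampleWeight G p S * (if ((G.induce S).core).cls = H then 1 else 0)

/-- The graph on `Fin k` pulled back along a vertex sample `x`. -/
def seqGraph (G : FinGraph) (k : ℕ) (x : Fin k → Fin G.n) : FinGraph where
  n := k
  adj i j := G.adj (x i) (x j)
  symm i j := G.symm _ _

/-- Law (pmf) of the with-replacement `p`-sampling `S̃_p(G)`: draw `K ~ Poisson(p·v(G))`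
vertices uniformly with replacement, form the graph on `Fin K` in which `i, j` are joined
whenever `(x_i, x_j)` is an edge of `G`, discard isolated vertices, and pass to the
isomorphism class. -/
noncomputable def wrSampleLaw (G : FinGraph) (p : ℝ) : UGraph → ℝ := fun H =>
  ∑' k : ℕ,
    (Real.exp (-(p * (G.v : ℝ))) * (p * (G.v : ℝ)) ^ k / (Nat.factorial k : ℝ)) *
      ((((univ : Finset (Fin k → Fin G.n)).filter
          (fun x => ((seqGraph G k x).core).cls = H)).card : ℝ) / ((G.v : ℝ)) ^ k)

/-- Total variation distance `sup_A |P(A) − Q(A)|` between two pmf-style laws on a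
countable discrete space. -/
noncomputable def dTV {α : Type*} (f g : α → ℝ) : ℝ :=
  ⨆ A : Set α, |∑' x : A, (f x.1 - g x.1)|

/-- `∑_i d_i · 1[d_i > k·√(e(G))]`, the total degree of vertices of degree exceeding
`k·√(e(G))`. -/
noncomputable def tailDegSum (G : FinGraph) (k : ℝ) : ℝ :=
  ∑ i : Fin G.n,
    (if k * Real.sqrt (G.e : ℝ) < (G.deg i : ℝ) then (G.deg i : ℝ) else 0)

/-- A sequence of graphs is uniformly sampling regular. -/
def UniformlySamplingRegular (G : ℕ → FinGraph) : Prop :=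
  ∀ ε : ℝ, 0 < ε → ∃ k : ℝ, 0 < k ∧ ∀ j,
    (1 / ((G j).e : ℝ)) * tailDegSum (G j) k < ε

/-- `E[e(S_p(G)) · 1[e(S_p(G)) > M]]`, the tail expectation of the number of non-loop
edges of the `p`-sampled subgraph (discarding isolated vertices does not change it). -/
noncomputable def expEdgeTail (G : FinGraph) (p M : ℝ) : ℝ :=
  ∑ S ∈ (univ : Finset (Fin G.n)).powerset,
    sampleWeight G p S *
      (if M < ((G.induce S).e : ℝ) then ((G.induce S).e : ℝ) else 0)

/-- `E[e(S_p(G))]`, the expected number of non-loop edges of the `p`-sampled subgraph. -/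
noncomputable def expEdge (G : FinGraph) (p : ℝ) : ℝ :=
  ∑ S ∈ (univ : Finset (Fin G.n)).powerset,
    sampleWeight G p S * ((G.induce S).e : ℝ)

/-- Law (pmf on ℕ) of the number of non-loop edges of the `p`-sampled subgraph. -/
noncomputable def edgeLaw (G : FinGraph) (p : ℝ) (m : ℕ) : ℝ :=
  ∑ S ∈ (univ : Finset (Fin G.n)).powerset,
    sampleWeight G p S * (if (G.induce S).e = m then 1 else 0)

/-- Number of kept neighbours (via non-loop edges) of vertex `i` under the selection `S`. -/
def keptNbrCount (G : FinGraph) (S : Finset (Fin G.n)) (i : Fin G.n) : ℕ :=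
  ((univ : Finset (Fin G.n)).filter (fun j => G.adj i j = true ∧ j ≠ i ∧ j ∈ S)).card

/-- `Pr(D_i ≥ 2)`: the probability that vertex `i` is kept and has at least two kept
neighbours, under independent Bernoulli(min p 1) vertex selection. -/
noncomputable def probD2 (G : FinGraph) (p : ℝ) (i : Fin G.n) : ℝ :=
  ∑ S ∈ (univ : Finset (Fin G.n)).powerset,
    sampleWeight G p S * (if i ∈ S ∧ 2 ≤ keptNbrCount G S i then 1 else 0)

/-- Probability that some kept vertex has at least two kept neighbours. -/
noncomputable def probSomeD2 (G : FinGraph) (p : ℝ) : ℝ :=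
  ∑ S ∈ (univ : Finset (Fin G.n)).powerset,
    sampleWeight G p S * (if ∃ i ∈ S, 2 ≤ keptNbrCount G S i then 1 else 0)

/-- Number of isolated kept (non-loop) edges: both endpoints kept, and each endpoint has
exactly one kept neighbour. -/
def isoEdgeCount (G : FinGraph) (S : Finset (Fin G.n)) : ℕ :=
  ((univ : Finset (Fin G.n × Fin G.n)).filter (fun q =>
    G.adj q.1 q.2 = true ∧ q.1 < q.2 ∧ q.1 ∈ S ∧ q.2 ∈ S ∧
    keptNbrCount G S q.1 = 1 ∧ keptNbrCount G S q.2 = 1)).card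

section Stmt8Aux

lemma ind_mul_ind_le {a b c : Prop} [Decidable a] [Decidable b] [Decidable c]
    (h : a → b → c) :
    (if a then (1:ℝ) else 0) * (if b then (1:ℝ) else 0) ≤ (if c then (1:ℝ) else 0) := by
  by_cases ha : a
  · by_cases hb : b
    · simp [ha, hb, h ha hb]
    · simp only [hb, if_false, mul_zero]
      positivity
  · simp only [ha, if_false, zero_mul]
    positivity

lemma ind_mul_ind_eq_zero {a b : Prop} [Decidable a] [Decidable b] (h : ¬(a ∧ b)) :
    (if a then (1:ℝ) else 0) * (if b then (1:ℝ) else 0) = 0 := by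
  by_cases ha : a <;> by_cases hb : b <;> simp_all

lemma sampleWeight_nonneg (G : FinGraph) (p : ℝ) (hp0 : 0 ≤ p) (hp1 : p ≤ 1)
    (S : Finset (Fin G.n)) : 0 ≤ sampleWeight G p S := by
  unfold sampleWeight
  rw [min_eq_left hp1]
  exact mul_nonneg (pow_nonneg hp0 _) (pow_nonneg (by linarith) _)

lemma keep_prob (G : FinGraph) (p : ℝ) (hp1 : p ≤ 1)
    (T : Finset (Fin G.n)) :
    ∑ S ∈ (univ : Finset (Fin G.n)).powerset,
      sampleWeight G p S * (if T ⊆ S then (1:ℝ) else 0) = p ^ T.card := by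
  have hmin : min p 1 = p := min_eq_left hp1
  have key : ∀ S ∈ (univ : Finset (Fin G.n)).powerset,
      sampleWeight G p S * (if T ⊆ S then (1:ℝ) else 0)
        = (∏ _i ∈ S, p) * ∏ i ∈ (univ : Finset (Fin G.n)) \ S,
            (if i ∈ T then 0 else (1 - p)) := by
    intro S _
    have hcard : ((univ : Finset (Fin G.n)) \ S).card = G.n - S.card := by
      rw [card_sdiff_of_subset (subset_univ S), card_univ, Fintype.card_fin]
    by_cases h : T ⊆ S
    · have : ∀ i ∈ (univ : Finset (Fin G.n)) \ S,
          (if i ∈ T then (0:ℝ) else (1 - p)) = 1 - p := by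
        intro i hi
        rw [if_neg]
        intro hiT
        exact (mem_sdiff.mp hi).2 (h hiT)
      rw [prod_congr rfl this, prod_const, prod_const, hcard, if_pos h,
        sampleWeight, hmin, mul_one]
    · obtain ⟨i, hiT, hiS⟩ := not_subset.mp h
      have hz : (∏ j ∈ (univ : Finset (Fin G.n)) \ S,
          (if j ∈ T then (0:ℝ) else (1 - p))) = 0 :=
        Finset.prod_eq_zero (mem_sdiff.mpr ⟨mem_univ i, hiS⟩) (if_pos hiT)
      rw [if_neg h, mul_zero, hz, mul_zero]
  rw [sum_congr rfl key, ← Finset.prod_add]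
  have : ∀ i ∈ (univ : Finset (Fin G.n)),
      (p + if i ∈ T then (0:ℝ) else (1 - p)) = if i ∈ T then p else 1 := by
    intro i _
    by_cases h : i ∈ T <;> simp [h]
  rw [prod_congr rfl this, Finset.prod_ite_mem, univ_inter, prod_const]

lemma two_le_kept (G : FinGraph) (S : Finset (Fin G.n)) (v a b : Fin G.n)
    (ha : G.adj v a = true) (hb : G.adj v b = true) (hav : a ≠ v) (hbv : b ≠ v)
    (haS : a ∈ S) (hbS : b ∈ S) (hab : a ≠ b) : 2 ≤ keptNbrCount G S v := by
  have hsub : ({a, b} : Finset (Fin G.n)) ⊆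
      (univ : Finset (Fin G.n)).filter (fun j => G.adj v j = true ∧ j ≠ v ∧ j ∈ S) := by
    intro x hx
    rcases Finset.mem_insert.mp hx with rfl | hx
    · exact mem_filter.mpr ⟨mem_univ _, ha, hav, haS⟩
    · rcases Finset.mem_singleton.mp hx with rfl
      exact mem_filter.mpr ⟨mem_univ _, hb, hbv, hbS⟩
  calc 2 = ({a, b} : Finset (Fin G.n)).card := (card_pair hab).symm
    _ ≤ _ := card_le_card hsub

lemma not_both_iso (G : FinGraph) (S : Finset (Fin G.n)) {q q' : Fin G.n × Fin G.n}
    (hadj : G.adj q.1 q.2 = true) (hlt : q.1 < q.2)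
    (hadj' : G.adj q'.1 q'.2 = true) (hlt' : q'.1 < q'.2)
    (hne : q ≠ q')
    (hsh : q.1 = q'.1 ∨ q.1 = q'.2 ∨ q.2 = q'.1 ∨ q.2 = q'.2)
    (h1 : q.1 ∈ S ∧ q.2 ∈ S ∧ keptNbrCount G S q.1 = 1 ∧ keptNbrCount G S q.2 = 1)
    (h2 : q'.1 ∈ S ∧ q'.2 ∈ S ∧ keptNbrCount G S q'.1 = 1 ∧ keptNbrCount G S q'.2 = 1) :
    False := by
  obtain ⟨h1a, h1b, h1k1, h1k2⟩ := h1
  obtain ⟨h2a, h2b, h2k1, h2k2⟩ := h2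
  rcases hsh with heq | heq | heq | heq
  · -- q.1 = q'.1
    have hab : q.2 ≠ q'.2 := fun h => hne (Prod.ext_iff.mpr ⟨heq, h⟩)
    have hb : G.adj q.1 q'.2 = true := by rw [heq]; exact hadj'
    have hbv : q'.2 ≠ q.1 := by rw [heq]; exact hlt'.ne'
    have := two_le_kept G S q.1 q.2 q'.2 hadj hb hlt.ne' hbv h1b h2b hab
    omega
  · -- q.1 = q'.2
    have hb : G.adj q.1 q'.1 = true := by rw [heq, G.symm]; exact hadj'
    have hbv : q'.1 ≠ q.1 := by rw [heq]; exact hlt'.ne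
    have hab : q.2 ≠ q'.1 := by
      intro h
      have : q.1 < q.1 := by
        calc q.1 < q.2 := hlt
        _ = q'.1 := h
        _ < q'.2 := hlt'
        _ = q.1 := heq.symm
      exact lt_irrefl _ this
    have := two_le_kept G S q.1 q.2 q'.1 hadj hb hlt.ne' hbv h1b h2a hab
    omega
  · -- q.2 = q'.1
    have ha : G.adj q.2 q.1 = true := by rw [G.symm]; exact hadj
    have hb : G.adj q.2 q'.2 = true := by rw [heq]; exact hadj'
    have hbv : q'.2 ≠ q.2 := by rw [heq]; exact hlt'.ne'
    have hab : q.1 ≠ q'.2 := by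
      intro h
      have : q.1 < q.1 := by
        calc q.1 < q.2 := hlt
        _ = q'.1 := heq
        _ < q'.2 := hlt'
        _ = q.1 := h.symm
      exact lt_irrefl _ this
    have := two_le_kept G S q.2 q.1 q'.2 ha hb hlt.ne hbv h1a h2b hab
    omega
  · -- q.2 = q'.2
    have ha : G.adj q.2 q.1 = true := by rw [G.symm]; exact hadj
    have hb : G.adj q.2 q'.1 = true := by rw [heq, G.symm]; exact hadj'
    have hbv : q'.1 ≠ q.2 := by rw [heq]; exact hlt'.ne
    have hab : q.1 ≠ q'.1 := fun h => hne (Prod.ext_iff.mpr ⟨h, heq⟩)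
    have := two_le_kept G S q.2 q.1 q'.1 ha hb hlt.ne hbv h1a h2a hab
    omega

lemma pair_bound (G : FinGraph) (p : ℝ) (hp0 : 0 ≤ p) (hp1 : p ≤ 1)
    (q q' : Fin G.n × Fin G.n)
    (hadj : G.adj q.1 q.2 = true) (hlt : q.1 < q.2)
    (hadj' : G.adj q'.1 q'.2 = true) (hlt' : q'.1 < q'.2) :
    ∑ S ∈ (univ : Finset (Fin G.n)).powerset,
      sampleWeight G p S *
        ((if (q.1 ∈ S ∧ q.2 ∈ S ∧ keptNbrCount G S q.1 = 1 ∧ keptNbrCount G S q.2 = 1)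
            then (1:ℝ) else 0) *
         (if (q'.1 ∈ S ∧ q'.2 ∈ S ∧ keptNbrCount G S q'.1 = 1 ∧ keptNbrCount G S q'.2 = 1)
            then (1:ℝ) else 0))
      ≤ p ^ 4 + if q = q' then p ^ 2 else 0 := by
  classical
  have hw := sampleWeight_nonneg G p hp0 hp1
  by_cases hqq : q = q'
  · subst hqq
    rw [if_pos rfl]
    have hstep : ∑ S ∈ (univ : Finset (Fin G.n)).powerset,
        sampleWeight G p S *
          ((if (q.1 ∈ S ∧ q.2 ∈ S ∧ keptNbrCount G S q.1 = 1 ∧ keptNbrCount G S q.2 = 1)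
              then (1:ℝ) else 0) *
           (if (q.1 ∈ S ∧ q.2 ∈ S ∧ keptNbrCount G S q.1 = 1 ∧ keptNbrCount G S q.2 = 1)
              then (1:ℝ) else 0))
        ≤ ∑ S ∈ (univ : Finset (Fin G.n)).powerset,
            sampleWeight G p S * (if ({q.1, q.2} : Finset (Fin G.n)) ⊆ S then (1:ℝ) else 0) := by
      refine sum_le_sum fun S _ => mul_le_mul_of_nonneg_left ?_ (hw S)
      refine ind_mul_ind_le fun h _ => ?_
      intro x hx
      rcases Finset.mem_insert.mp hx with rfl | hx
      · exact h.1
      · rw [Finset.mem_singleton.mp hx]; exact h.2.1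
    refine hstep.trans ?_
    rw [keep_prob G p hp1, card_pair hlt.ne]
    have : 0 ≤ p ^ 4 := pow_nonneg hp0 4
    linarith
  · rw [if_neg hqq, add_zero]
    by_cases hsh : q.1 = q'.1 ∨ q.1 = q'.2 ∨ q.2 = q'.1 ∨ q.2 = q'.2
    · have hz : ∀ S ∈ (univ : Finset (Fin G.n)).powerset,
          sampleWeight G p S *
            ((if (q.1 ∈ S ∧ q.2 ∈ S ∧ keptNbrCount G S q.1 = 1 ∧ keptNbrCount G S q.2 = 1)
                then (1:ℝ) else 0) *
             (if (q'.1 ∈ S ∧ q'.2 ∈ S ∧ keptNbrCount G S q'.1 = 1 ∧ keptNbrCount G S q'.2 = 1)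
                then (1:ℝ) else 0)) = 0 := by
        intro S _
        rw [ind_mul_ind_eq_zero, mul_zero]
        rintro ⟨ha, hb⟩
        exact not_both_iso G S hadj hlt hadj' hlt' hqq hsh ha hb
      rw [sum_congr rfl hz, Finset.sum_const_zero]
      positivity
    · push_neg at hsh
      obtain ⟨d11, d12, d21, d22⟩ := hsh
      have hTcard : (insert q.1 (insert q.2 (insert q'.1 ({q'.2} : Finset (Fin G.n))))).card = 4 := by
        rw [card_insert_of_notMem (by simp [hlt.ne, d11, d12]),
          card_insert_of_notMem (by simp [d21, d22]),
          card_insert_of_notMem (by simp [hlt'.ne]), card_singleton]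
      have hstep : ∑ S ∈ (univ : Finset (Fin G.n)).powerset,
          sampleWeight G p S *
            ((if (q.1 ∈ S ∧ q.2 ∈ S ∧ keptNbrCount G S q.1 = 1 ∧ keptNbrCount G S q.2 = 1)
                then (1:ℝ) else 0) *
             (if (q'.1 ∈ S ∧ q'.2 ∈ S ∧ keptNbrCount G S q'.1 = 1 ∧ keptNbrCount G S q'.2 = 1)
                then (1:ℝ) else 0))
          ≤ ∑ S ∈ (univ : Finset (Fin G.n)).powerset,
              sampleWeight G p S *
                (if (insert q.1 (insert q.2 (insert q'.1 ({q'.2} : Finset (Fin G.n))))) ⊆ S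
                  then (1:ℝ) else 0) := by
        refine sum_le_sum fun S _ => mul_le_mul_of_nonneg_left ?_ (hw S)
        refine ind_mul_ind_le fun h h' => ?_
        intro x hx
        simp only [Finset.mem_insert, Finset.mem_singleton] at hx
        rcases hx with rfl | rfl | rfl | rfl
        · exact h.1
        · exact h.2.1
        · exact h'.1
        · exact h'.2.1
      refine hstep.trans ?_
      rw [keep_prob G p hp1, hTcard]

end Stmt8Aux

/-- Keep each vertex of `G` independently with probability `p`, and let
`e^I` be the number of isolated kept edges (both endpoints kept, each endpoint with
exactly one kept neighbour). Then `E[(e^I)²] ≤ e²·p⁴ + e·p²`; in particular with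
`p = r/√(2e) ≤ 1` one gets `E[(e^I)²] ≤ r⁴/4 + r²/2`, a bound independent of `G`. -/
theorem stmt8 (G : FinGraph) (p : ℝ) (hp0 : 0 ≤ p) (hp1 : p ≤ 1) :
    ((∑ S ∈ (univ : Finset (Fin G.n)).powerset,
        sampleWeight G p S * (isoEdgeCount G S : ℝ) ^ 2) ≤
      (G.e : ℝ) ^ 2 * p ^ 4 + (G.e : ℝ) * p ^ 2) ∧
    ∀ r : ℝ, 0 ≤ r → p = r / Real.sqrt (2 * (G.e : ℝ)) →
      (∑ S ∈ (univ : Finset (Fin G.n)).powerset,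
          sampleWeight G p S * (isoEdgeCount G S : ℝ) ^ 2) ≤
        r ^ 4 / 4 + r ^ 2 / 2 := by

  classical
  set Ed : Finset (Fin G.n × Fin G.n) :=
    (univ : Finset (Fin G.n × Fin G.n)).filter
      (fun q => G.adj q.1 q.2 = true ∧ q.1 < q.2) with hEdDef
  have hEd : G.e = Ed.card := rfl
  have hiso : ∀ S : Finset (Fin G.n), (isoEdgeCount G S : ℝ) =
      ∑ q ∈ Ed, (if (q.1 ∈ S ∧ q.2 ∈ S ∧
          keptNbrCount G S q.1 = 1 ∧ keptNbrCount G S q.2 = 1) then (1:ℝ) else 0) := by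
    intro S
    have hfil : ((univ : Finset (Fin G.n × Fin G.n)).filter (fun q =>
        G.adj q.1 q.2 = true ∧ q.1 < q.2 ∧ q.1 ∈ S ∧ q.2 ∈ S ∧
        keptNbrCount G S q.1 = 1 ∧ keptNbrCount G S q.2 = 1)) =
        Ed.filter (fun q => q.1 ∈ S ∧ q.2 ∈ S ∧
          keptNbrCount G S q.1 = 1 ∧ keptNbrCount G S q.2 = 1) := by
      rw [hEdDef, filter_filter]
      apply filter_congr
      intro q _
      tauto
    rw [isoEdgeCount, hfil, Finset.natCast_card_filter]
  have main : (∑ S ∈ (univ : Finset (Fin G.n)).powerset,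
      sampleWeight G p S * (isoEdgeCount G S : ℝ) ^ 2) ≤
      (G.e : ℝ) ^ 2 * p ^ 4 + (G.e : ℝ) * p ^ 2 := by
    calc (∑ S ∈ (univ : Finset (Fin G.n)).powerset,
        sampleWeight G p S * (isoEdgeCount G S : ℝ) ^ 2)
        = ∑ S ∈ (univ : Finset (Fin G.n)).powerset, ∑ q ∈ Ed, ∑ q' ∈ Ed,
            sampleWeight G p S *
              ((if (q.1 ∈ S ∧ q.2 ∈ S ∧ keptNbrCount G S q.1 = 1 ∧ keptNbrCount G S q.2 = 1)
                  then (1:ℝ) else 0) *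
               (if (q'.1 ∈ S ∧ q'.2 ∈ S ∧ keptNbrCount G S q'.1 = 1 ∧ keptNbrCount G S q'.2 = 1)
                  then (1:ℝ) else 0)) := by
          refine sum_congr rfl fun S _ => ?_
          rw [hiso S, sq, Finset.sum_mul_sum, mul_sum]
          exact sum_congr rfl fun q _ => mul_sum _ _ _
      _ = ∑ q ∈ Ed, ∑ q' ∈ Ed, ∑ S ∈ (univ : Finset (Fin G.n)).powerset,
            sampleWeight G p S *
              ((if (q.1 ∈ S ∧ q.2 ∈ S ∧ keptNbrCount G S q.1 = 1 ∧ keptNbrCount G S q.2 = 1)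
                  then (1:ℝ) else 0) *
               (if (q'.1 ∈ S ∧ q'.2 ∈ S ∧ keptNbrCount G S q'.1 = 1 ∧ keptNbrCount G S q'.2 = 1)
                  then (1:ℝ) else 0)) := by
          rw [Finset.sum_comm]
          exact sum_congr rfl fun q _ => Finset.sum_comm
      _ ≤ ∑ q ∈ Ed, ∑ q' ∈ Ed, (p ^ 4 + if q = q' then p ^ 2 else 0) := by
          refine sum_le_sum fun q hq => sum_le_sum fun q' hq' => ?_
          obtain ⟨hadj, hlt⟩ := (mem_filter.mp hq).2
          obtain ⟨hadj', hlt'⟩ := (mem_filter.mp hq').2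
          exact pair_bound G p hp0 hp1 q q' hadj hlt hadj' hlt'
      _ = (Ed.card : ℝ) * ((Ed.card : ℝ) * p ^ 4 + p ^ 2) := by
          have hin : ∀ q ∈ Ed, ∑ q' ∈ Ed, (p ^ 4 + if q = q' then p ^ 2 else 0)
              = (Ed.card : ℝ) * p ^ 4 + p ^ 2 := by
            intro q hq
            rw [Finset.sum_add_distrib, sum_const, nsmul_eq_mul, Finset.sum_ite_eq,
              if_pos hq]
          rw [sum_congr rfl hin, sum_const, nsmul_eq_mul]
      _ ≤ (G.e : ℝ) ^ 2 * p ^ 4 + (G.e : ℝ) * p ^ 2 := by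
          rw [hEd]
          nlinarith [pow_nonneg hp0 4, pow_nonneg hp0 2]
  refine ⟨main, fun r hr hpr => ?_⟩
  by_cases he : G.e = 0
  · refine main.trans ?_
    rw [he]
    push_cast
    norm_num
    positivity
  · have hepos : (0:ℝ) < (G.e : ℝ) := by exact_mod_cast Nat.pos_of_ne_zero he
    have h2e : (0:ℝ) < 2 * (G.e : ℝ) := by linarith
    have hp2 : p ^ 2 = r ^ 2 / (2 * (G.e : ℝ)) := by
      rw [hpr, div_pow, Real.sq_sqrt h2e.le]
    have heq : (G.e : ℝ) ^ 2 * p ^ 4 + (G.e : ℝ) * p ^ 2 = r ^ 4 / 4 + r ^ 2 / 2 := by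
      have hp4 : p ^ 4 = (p ^ 2) ^ 2 := by ring
      rw [hp4, hp2]
      field_simp
      ring
    linarith [main]
end

section
/- Let G be a finite loopless graph with e non-loop edges, and let 0 < q ≤ p ≤ 1. Then the total variation distance between the law of the p-sampling S_p(G) and the law of the q-sampling S_q(G) is at most 2·e·p·(p − q); equivalently, for p,q ∈ (0,1] the distance is at most 2·p·q·e·max(p/q − 1, q/p − 1). -/
open Filter Finset
open scoped Classical ENNReal

section Stmt9Aux

lemma tsum_indicator_sum9 {α : Type*} {ι : Type*} [Fintype ι] (c : ι → ℝ) (m : ι → α)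
    (A : Set α) :
    ∑' x : A, (∑ i : ι, c i * (if m i = (x : α) then 1 else 0))
      = ∑ i : ι, c i * (if m i ∈ A then 1 else 0) := by
  have hsummable : ∀ i : ι, Summable (fun x : A => c i * (if m i = (x : α) then 1 else 0)) := by
    intro i
    by_cases h : m i ∈ A
    · apply summable_of_ne_finset_zero (s := {(⟨m i, h⟩ : A)})
      intro x hx
      simp only [Finset.mem_singleton] at hx
      have hne : m i ≠ (x : α) := fun he => hx (Subtype.ext he.symm)
      simp [hne]
    · apply summable_of_ne_finset_zero (s := (∅ : Finset A))
      intro x _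
      have hne : m i ≠ (x : α) := fun he => h (he ▸ x.2)
      simp [hne]
  rw [Summable.tsum_finsetSum (fun i _ => hsummable i)]
  refine Finset.sum_congr rfl fun i _ => ?_
  by_cases h : m i ∈ A
  · have heq : (fun x : A => c i * (if m i = (x : α) then 1 else 0))
        = fun x : A => if x = ⟨m i, h⟩ then c i else 0 := by
      funext x
      by_cases hx : x = ⟨m i, h⟩
      · subst hx; simp
      · have hne : m i ≠ (x : α) := fun he => hx (Subtype.ext he.symm)
        simp [hne, hx]
    rw [heq, tsum_ite_eq]
    simp [h]
  · have heq : (fun x : A => c i * (if m i = (x : α) then 1 else 0)) = fun _ => 0 := by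
      funext x
      have hne : m i ≠ (x : α) := fun he => h (he ▸ x.2)
      simp [hne]
    rw [heq, tsum_zero]
    simp [h]

lemma dTV_comm9 {α : Type*} (f g : α → ℝ) : dTV f g = dTV g f := by
  unfold dTV
  congr 1
  funext A
  rw [← abs_neg, ← tsum_neg]
  exact congrArg abs (tsum_congr fun x => by ring)

end Stmt9Aux
section Stmt9Marg

variable {ι : Type*} [Fintype ι] [DecidableEq ι]

lemma sum_prod_swap9 (v : ι → Fin 3 → ℝ) :
    ∑ σ : ι → Fin 3, ∏ i, v i (σ i) = ∏ i, ∑ k : Fin 3, v i k := by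
  rw [Finset.prod_univ_sum, Fintype.piFinset_univ]

lemma prod_ite_mem_card9 (S : Finset ι) (a b : ℝ) :
    ∏ i : ι, (if i ∈ S then a else b) = a ^ S.card * b ^ (Fintype.card ι - S.card) := by
  rw [Finset.prod_ite, Finset.prod_const, Finset.prod_const]
  congr 2
  · simp
  · rw [Finset.filter_not, Finset.card_sdiff_of_subset (Finset.filter_subset _ _)]
    congr 1 <;> simp [Finset.card_univ]

lemma margGen9 (v : Fin 3 → ℝ) (pr : Fin 3 → Prop) [DecidablePred pr] (F : Finset ι → ℝ) :
    ∑ σ : ι → Fin 3, (∏ i, v (σ i)) * F (Finset.univ.filter fun i => pr (σ i))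
      = ∑ S : Finset ι,
          (∑ k : Fin 3, v k * (if pr k then 1 else 0)) ^ S.card *
            (∑ k : Fin 3, v k * (if ¬ pr k then 1 else 0)) ^ (Fintype.card ι - S.card) * F S := by
  have h1 : ∀ σ : ι → Fin 3,
      (∏ i, v (σ i)) * F (Finset.univ.filter fun i => pr (σ i))
        = ∑ S : Finset ι,
            (∏ i, (v (σ i) * (if (pr (σ i) ↔ i ∈ S) then 1 else 0))) * F S := by
    intro σ
    have h2 : ∀ S : Finset ι,
        (∏ i, (v (σ i) * (if (pr (σ i) ↔ i ∈ S) then 1 else 0)))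
          = (∏ i, v (σ i)) * (if (Finset.univ.filter fun i => pr (σ i)) = S then 1 else 0) := by
      intro S
      rw [Finset.prod_mul_distrib, Finset.prod_boole]
      have hiff : (∀ i ∈ Finset.univ, (pr (σ i) ↔ i ∈ S))
          ↔ (Finset.univ.filter fun i => pr (σ i)) = S := by
        rw [Finset.ext_iff]; simp
      simp only [hiff]
    calc (∏ i, v (σ i)) * F (Finset.univ.filter fun i => pr (σ i))
        = ∑ S : Finset ι,
            (if (Finset.univ.filter fun i => pr (σ i)) = S
              then (∏ i, v (σ i)) * F S else 0) := by
          rw [Finset.sum_ite_eq]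
          simp
      _ = _ := by
          refine Finset.sum_congr rfl fun S _ => ?_
          rw [h2 S]
          by_cases h : (Finset.univ.filter fun i => pr (σ i)) = S <;> simp [h]
  rw [Finset.sum_congr rfl fun σ _ => h1 σ, Finset.sum_comm]
  refine Finset.sum_congr rfl fun S _ => ?_
  rw [← Finset.sum_mul,
    sum_prod_swap9 (fun i k => v k * (if (pr k ↔ i ∈ S) then 1 else 0))]
  congr 1
  have h3 : ∀ i : ι, (∑ k : Fin 3, v k * (if (pr k ↔ i ∈ S) then 1 else 0))
      = if i ∈ S then (∑ k : Fin 3, v k * (if pr k then 1 else 0))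
        else (∑ k : Fin 3, v k * (if ¬ pr k then 1 else 0)) := by
    intro i
    by_cases h : i ∈ S <;> simp [h]
  rw [Finset.prod_congr rfl fun i _ => h3 i, prod_ite_mem_card9]

end Stmt9Marg
section Stmt9Bad

variable {ι : Type*} [Fintype ι] [DecidableEq ι]

lemma badPair9 (v : Fin 3 → ℝ) (hv : ∑ m : Fin 3, v m = 1) {i j : ι} (hij : i ≠ j) :
    ∑ σ : ι → Fin 3, (∏ k, v (σ k)) * (if σ i = 2 ∧ σ j ≠ 0 then 1 else 0)
      = (∑ m : Fin 3, v m * (if m = 2 then 1 else 0)) *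
          (∑ m : Fin 3, v m * (if m ≠ 0 then 1 else 0)) := by
  have h1 : ∀ σ : ι → Fin 3,
      (∏ k, v (σ k)) * (if σ i = 2 ∧ σ j ≠ 0 then 1 else 0)
        = ∏ k, (v (σ k) *
            (if k = i then (if σ k = 2 then 1 else 0)
              else if k = j then (if σ k ≠ 0 then 1 else 0) else 1)) := by
    intro σ
    rw [Finset.prod_mul_distrib]
    congr 1
    have hsplit : (if σ i = 2 ∧ σ j ≠ 0 then (1:ℝ) else 0)
        = (if σ i = 2 then (1:ℝ) else 0) * (if σ j ≠ 0 then (1:ℝ) else 0) := by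
      by_cases h1 : σ i = 2 <;> by_cases h2 : σ j ≠ 0 <;> simp [h1, h2]
    rw [hsplit,
      ← Finset.prod_subset (Finset.subset_univ ({i, j} : Finset ι)) (fun x _ hx => ?_),
      Finset.prod_pair hij]
    · simp [hij, Ne.symm hij]
    · simp only [Finset.mem_insert, Finset.mem_singleton] at hx
      push_neg at hx
      simp [hx.1, hx.2]
  rw [Finset.sum_congr rfl fun σ _ => h1 σ,
    sum_prod_swap9 (fun k m => v m *
      (if k = i then (if m = 2 then 1 else 0)
        else if k = j then (if m ≠ 0 then 1 else 0) else 1))]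
  rw [← Finset.prod_subset (Finset.subset_univ ({i, j} : Finset ι)) (fun x _ hx => ?_),
    Finset.prod_pair hij]
  · simp [hij, Ne.symm hij]
  · simp only [Finset.mem_insert, Finset.mem_singleton] at hx
    push_neg at hx
    simp only [hx.1, hx.2, if_false, mul_one]
    exact hv

end Stmt9Bad
section Stmt9Graph

lemma iso_induce_induce9 (G : FinGraph) (S : Finset (Fin G.n))
    (A : Finset (Fin (G.induce S).n)) :
    FinGraph.Iso ((G.induce S).induce A)
      (G.induce (A.image (fun i => ((S.orderIsoOfFin rfl i : {x // x ∈ S}) : Fin G.n)))) := by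
  classical
  have hfinj : Function.Injective
      (fun i : Fin (G.induce S).n => ((S.orderIsoOfFin rfl i : {x // x ∈ S}) : Fin G.n)) := by
    intro a b h
    exact (S.orderIsoOfFin rfl).injective (Subtype.ext h)
  have hbij : Function.Bijective
      (fun x : {x // x ∈ A} =>
        (⟨((S.orderIsoOfFin rfl x.1 : {x // x ∈ S}) : Fin G.n),
          Finset.mem_image_of_mem _ x.2⟩ :
            {y // y ∈ A.image (fun i => ((S.orderIsoOfFin rfl i : {x // x ∈ S}) : Fin G.n))})) := by
    constructor
    · intro x y h
      have h2 := congrArg Subtype.val h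
      exact Subtype.ext (hfinj h2)
    · intro y
      obtain ⟨a, ha, hay⟩ := Finset.mem_image.mp y.2
      exact ⟨⟨a, ha⟩, Subtype.ext hay⟩
  refine ⟨(A.orderIsoOfFin rfl).toEquiv.trans ((Equiv.ofBijective _ hbij).trans
    ((A.image (fun i => ((S.orderIsoOfFin rfl i : {x // x ∈ S}) : Fin G.n))).orderIsoOfFin
      rfl).toEquiv.symm), fun i j => ?_⟩
  have haux : ∀ (B : Finset (Fin G.n)) (y : {v // v ∈ B}),
      B.orderEmbOfFin rfl ((B.orderIsoOfFin rfl).symm y) = (y : Fin G.n) := by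
    intro B y
    rw [← Finset.coe_orderIsoOfFin_apply, OrderIso.apply_symm_apply]
  simp only [FinGraph.induce]
  congr 1
  · exact (congrArg Subtype.val (OrderIso.apply_symm_apply
      ((A.image (fun i => ((S.orderIsoOfFin rfl i : {x // x ∈ S}) : Fin G.n))).orderIsoOfFin rfl)
      ⟨_, Finset.mem_image_of_mem _ (A.orderIsoOfFin rfl i).2⟩)).symm
  · exact (congrArg Subtype.val (OrderIso.apply_symm_apply
      ((A.image (fun i => ((S.orderIsoOfFin rfl i : {x // x ∈ S}) : Fin G.n))).orderIsoOfFin rfl)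
      ⟨_, Finset.mem_image_of_mem _ (A.orderIsoOfFin rfl j).2⟩)).symm

end Stmt9Graph
section Stmt9Core

lemma image_core_filter9 (G : FinGraph) (S : Finset (Fin G.n)) :
    ((Finset.univ.filter (fun i : Fin (G.induce S).n => ∃ j, (G.induce S).adj i j = true)).image
        (fun i => ((S.orderIsoOfFin rfl i : {x // x ∈ S}) : Fin G.n)))
      = S.filter (fun v => ∃ w ∈ S, G.adj v w = true) := by
  have key : ∀ {β : Type} (p : β → Prop) (inst : DecidablePred p) (s : Finset β) (a : β),
      a ∈ @Finset.filter β p inst s ↔ a ∈ s ∧ p a := fun p inst s a => Finset.mem_filter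
  ext v
  rw [Finset.mem_filter]
  constructor
  · intro h
    obtain ⟨i, hi, rfl⟩ := Finset.mem_image.mp h
    obtain ⟨j, hadj⟩ := ((key _ _ _ _).mp hi).2
    exact ⟨(S.orderIsoOfFin rfl i).2,
      ((S.orderIsoOfFin rfl j : {x // x ∈ S}) : Fin G.n), (S.orderIsoOfFin rfl j).2, hadj⟩
  · rintro ⟨hv, w, hw, hadj⟩
    have hmem : (S.orderIsoOfFin rfl).symm ⟨v, hv⟩ ∈ Finset.univ.filter
        (fun i : Fin (G.induce S).n => ∃ j, (G.induce S).adj i j = true) := by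
      refine (key _ _ _ _).mpr ⟨Finset.mem_univ _, (S.orderIsoOfFin rfl).symm ⟨w, hw⟩, ?_⟩
      show G.adj ((S.orderIsoOfFin rfl ((S.orderIsoOfFin rfl).symm ⟨v, hv⟩)) : Fin G.n)
        ((S.orderIsoOfFin rfl ((S.orderIsoOfFin rfl).symm ⟨w, hw⟩)) : Fin G.n) = true
      simp only [OrderIso.apply_symm_apply]
      exact hadj
    refine Finset.mem_image.mpr ⟨(S.orderIsoOfFin rfl).symm ⟨v, hv⟩, hmem, ?_⟩
    · simp only [OrderIso.apply_symm_apply]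

lemma cls_core_induce9 (G : FinGraph) (S : Finset (Fin G.n)) :
    ((G.induce S).core).cls
      = (G.induce (S.filter (fun v => ∃ w ∈ S, G.adj v w = true))).cls := by
  rw [← image_core_filter9 G S]
  exact Quot.sound (iso_induce_induce9 G S _)

lemma filter_core_eq9 (G : FinGraph) {S T : Finset (Fin G.n)} (hTS : T ⊆ S)
    (h : ∀ i ∈ S, i ∉ T → ∀ j ∈ S, G.adj i j = false) :
    S.filter (fun v => ∃ w ∈ S, G.adj v w = true)
      = T.filter (fun v => ∃ w ∈ T, G.adj v w = true) := by
  ext v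
  simp only [Finset.mem_filter]
  constructor
  · rintro ⟨hvS, w, hwS, hadj⟩
    have hvT : v ∈ T := by
      by_contra hvT
      rw [h v hvS hvT w hwS] at hadj
      exact Bool.false_ne_true hadj
    have hwT : w ∈ T := by
      by_contra hwT
      have h2 := h w hwS hwT v hvS
      rw [G.symm w v, hadj] at h2
      exact Bool.noConfusion h2
    exact ⟨hvT, w, hwT, hadj⟩
  · rintro ⟨hvT, w, hwT, hadj⟩
    exact ⟨hTS hvT, w, hTS hwT, hadj⟩

lemma card_orderedEdges9 (G : FinGraph) :
    (Finset.univ.filter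
        (fun z : Fin G.n × Fin G.n => G.adj z.1 z.2 = true ∧ z.1 ≠ z.2)).card = 2 * G.e := by
  classical
  have hsplit : (Finset.univ.filter
        (fun z : Fin G.n × Fin G.n => G.adj z.1 z.2 = true ∧ z.1 ≠ z.2))
      = (Finset.univ.filter (fun z : Fin G.n × Fin G.n => G.adj z.1 z.2 = true ∧ z.1 < z.2))
        ∪ (Finset.univ.filter (fun z : Fin G.n × Fin G.n => G.adj z.1 z.2 = true ∧ z.2 < z.1)) := by
    rw [← Finset.filter_or]
    refine Finset.filter_congr fun z _ => ?_
    constructor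
    · rintro ⟨ha, hne⟩
      rcases lt_or_gt_of_ne hne with h | h
      · exact Or.inl ⟨ha, h⟩
      · exact Or.inr ⟨ha, h⟩
    · rintro (⟨ha, h⟩ | ⟨ha, h⟩)
      · exact ⟨ha, ne_of_lt h⟩
      · exact ⟨ha, (ne_of_lt h).symm⟩
  have hdisj : Disjoint
      (Finset.univ.filter (fun z : Fin G.n × Fin G.n => G.adj z.1 z.2 = true ∧ z.1 < z.2))
      (Finset.univ.filter (fun z : Fin G.n × Fin G.n => G.adj z.1 z.2 = true ∧ z.2 < z.1)) := by
    rw [Finset.disjoint_left]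
    rintro z hz hz'
    simp only [Finset.mem_filter] at hz hz'
    exact absurd (hz.2.2.trans hz'.2.2) (lt_irrefl _)
  have hswap : (Finset.univ.filter
        (fun z : Fin G.n × Fin G.n => G.adj z.1 z.2 = true ∧ z.2 < z.1)).card = G.e := by
    refine Finset.card_bij (fun z _ => (z.2, z.1)) ?_ ?_ ?_
    · intro z hz
      simp only [Finset.mem_filter, Finset.mem_univ, true_and] at hz ⊢
      exact ⟨(G.symm z.2 z.1).trans hz.1, hz.2⟩
    · intro a ha b hb hab
      exact Prod.ext (congrArg Prod.snd hab) (congrArg Prod.fst hab)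
    · intro b hb
      simp only [Finset.mem_filter, Finset.mem_univ, true_and] at hb ⊢
      exact ⟨(b.2, b.1), ⟨(G.symm b.2 b.1).trans hb.1, hb.2⟩, rfl⟩
  rw [hsplit, Finset.card_union_of_disjoint hdisj, two_mul, hswap]
  rfl

end Stmt9Core
section Stmt9Main

lemma main_bound9 (G : FinGraph) (hG : G.Loopless) {p q : ℝ} (hq : 0 < q) (hqp : q ≤ p)
    (hp1 : p ≤ 1) :
    dTV (pSampleLaw G p) (pSampleLaw G q) ≤ 2 * (G.e : ℝ) * p * (p - q) := by
  classical
  have hq1 : q ≤ 1 := hqp.trans hp1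
  have hp0 : 0 ≤ p := hq.le.trans hqp
  set v : Fin 3 → ℝ := ![1 - p, q, p - q] with hv
  have hvnn : ∀ k, 0 ≤ v k := by
    intro k
    fin_cases k <;> simp [hv] <;> linarith
  have hvsum : ∑ k : Fin 3, v k = 1 := by
    rw [Fin.sum_univ_three]
    simp [hv]
  set m : Finset (Fin G.n) → UGraph := fun S => ((G.induce S).core).cls with hm
  unfold dTV
  refine ciSup_le fun A => ?_
  set F : Finset (Fin G.n) → ℝ := fun S => if m S ∈ A then 1 else 0 with hF
  have hlaw : ∀ (r : ℝ) (H : UGraph), pSampleLaw G r H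
      = ∑ S : Finset (Fin G.n), sampleWeight G r S * (if m S = H then 1 else 0) := by
    intro r H
    rw [pSampleLaw, Finset.powerset_univ]
  have h1 : ∑' x : A, (pSampleLaw G p x.1 - pSampleLaw G q x.1)
      = ∑ S : Finset (Fin G.n), sampleWeight G p S * F S
          - ∑ S : Finset (Fin G.n), sampleWeight G q S * F S := by
    calc ∑' x : A, (pSampleLaw G p x.1 - pSampleLaw G q x.1)
        = ∑' x : A, ∑ S : Finset (Fin G.n),
            (sampleWeight G p S - sampleWeight G q S) * (if m S = (x : UGraph) then 1 else 0) := by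
          refine tsum_congr fun x => ?_
          rw [hlaw p, hlaw q, ← Finset.sum_sub_distrib]
          exact Finset.sum_congr rfl fun S _ => (sub_mul _ _ _).symm
      _ = ∑ S : Finset (Fin G.n), (sampleWeight G p S - sampleWeight G q S) * F S :=
          tsum_indicator_sum9 _ m A
      _ = _ := by
          rw [← Finset.sum_sub_distrib]
          exact Finset.sum_congr rfl fun S _ => sub_mul _ _ _
  have hd10 : (1 : Fin 3) ≠ 0 := by decide
  have hd20 : (2 : Fin 3) ≠ 0 := by decide
  have hd01 : (0 : Fin 3) ≠ 1 := by decide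
  have hd21 : (2 : Fin 3) ≠ 1 := by decide
  have hd02 : (0 : Fin 3) ≠ 2 := by decide
  have hd12 : (1 : Fin 3) ≠ 2 := by decide
  have haP : (∑ k : Fin 3, v k * (if k ≠ (0 : Fin 3) then 1 else 0)) = p := by
    rw [Fin.sum_univ_three]
    norm_num [hv, hd10, hd20, Matrix.cons_val_two, Matrix.tail_cons, Matrix.head_cons]
  have hbP : (∑ k : Fin 3, v k * (if ¬ k ≠ (0 : Fin 3) then 1 else 0)) = 1 - p := by
    rw [Fin.sum_univ_three]
    norm_num [hv, hd10, hd20, Matrix.cons_val_two, Matrix.tail_cons, Matrix.head_cons]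
  have haQ : (∑ k : Fin 3, v k * (if k = (1 : Fin 3) then 1 else 0)) = q := by
    rw [Fin.sum_univ_three]
    norm_num [hv, hd01, hd21, Matrix.cons_val_two, Matrix.tail_cons, Matrix.head_cons]
  have hbQ : (∑ k : Fin 3, v k * (if ¬ k = (1 : Fin 3) then 1 else 0)) = 1 - q := by
    rw [Fin.sum_univ_three]
    norm_num [hv, hd01, hd21, Matrix.cons_val_two, Matrix.tail_cons, Matrix.head_cons]
  have hP : ∑ σ : Fin G.n → Fin 3,
        (∏ i, v (σ i)) * F (Finset.univ.filter fun i => σ i ≠ 0)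
      = ∑ S : Finset (Fin G.n), sampleWeight G p S * F S := by
    rw [margGen9 v (fun k => k ≠ 0) F]
    refine Finset.sum_congr rfl fun S _ => ?_
    rw [haP, hbP, sampleWeight, min_eq_left hp1, Fintype.card_fin]
  have hQ : ∑ σ : Fin G.n → Fin 3,
        (∏ i, v (σ i)) * F (Finset.univ.filter fun i => σ i = 1)
      = ∑ S : Finset (Fin G.n), sampleWeight G q S * F S := by
    rw [margGen9 v (fun k => k = 1) F]
    refine Finset.sum_congr rfl fun S _ => ?_
    rw [haQ, hbQ, sampleWeight, min_eq_left hq1, Fintype.card_fin]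
  rw [h1, ← hP, ← hQ, ← Finset.sum_sub_distrib]
  have hcomb : ∀ σ : Fin G.n → Fin 3,
      (∏ i, v (σ i)) * F (Finset.univ.filter fun i => σ i ≠ 0)
          - (∏ i, v (σ i)) * F (Finset.univ.filter fun i => σ i = 1)
        = (∏ i, v (σ i)) * (F (Finset.univ.filter fun i => σ i ≠ 0)
            - F (Finset.univ.filter fun i => σ i = 1)) := fun σ => (mul_sub _ _ _).symm
  rw [Finset.sum_congr rfl fun σ _ => hcomb σ]
  set E : Finset (Fin G.n × Fin G.n) := Finset.univ.filter
    (fun z : Fin G.n × Fin G.n => G.adj z.1 z.2 = true ∧ z.1 ≠ z.2) with hE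
  have hstep : ∀ σ : Fin G.n → Fin 3,
      |(∏ i, v (σ i)) * (F (Finset.univ.filter fun i => σ i ≠ 0)
          - F (Finset.univ.filter fun i => σ i = 1))|
        ≤ ∑ z ∈ E, (∏ i, v (σ i)) * (if σ z.1 = 2 ∧ σ z.2 ≠ 0 then 1 else 0) := by
    intro σ
    have hw : 0 ≤ ∏ i, v (σ i) := Finset.prod_nonneg fun i _ => hvnn _
    rw [abs_mul, abs_of_nonneg hw, ← Finset.mul_sum]
    refine mul_le_mul_of_nonneg_left ?_ hw
    by_cases hbad : ∃ z ∈ E, σ z.1 = 2 ∧ σ z.2 ≠ 0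
    · obtain ⟨z, hzE, hz⟩ := hbad
      have hle : (1:ℝ) ≤ ∑ z ∈ E, (if σ z.1 = 2 ∧ σ z.2 ≠ 0 then (1:ℝ) else 0) := by
        have := Finset.single_le_sum
          (f := fun z : Fin G.n × Fin G.n => if σ z.1 = 2 ∧ σ z.2 ≠ 0 then (1:ℝ) else 0)
          (fun z _ => by split <;> norm_num) hzE
        simpa [hz] using this
      refine le_trans ?_ hle
      rw [hF]
      by_cases h1 : m (Finset.univ.filter fun i => σ i ≠ 0) ∈ A <;>
        by_cases h2 : m (Finset.univ.filter fun i => σ i = 1) ∈ A <;>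
        simp [h1, h2]
    · push_neg at hbad
      have hsub : (Finset.univ.filter fun i => σ i = 1)
          ⊆ (Finset.univ.filter fun i => σ i ≠ 0) := by
        intro x hx
        simp only [Finset.mem_filter, Finset.mem_univ, true_and] at hx ⊢
        rw [hx]
        decide
      have hprop : ∀ i ∈ (Finset.univ.filter fun i => σ i ≠ 0),
          i ∉ (Finset.univ.filter fun i => σ i = 1) →
          ∀ j ∈ (Finset.univ.filter fun i => σ i ≠ 0), G.adj i j = false := by
        intro i hi hiT j hj
        simp only [Finset.mem_filter, Finset.mem_univ, true_and] at hi hj hiT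
        have hσi : σ i = 2 := by
          have hlt := (σ i).isLt
          have h0 : (σ i).val ≠ 0 := fun h => hi (Fin.ext h)
          have h1 : (σ i).val ≠ 1 := fun h => hiT (Fin.ext h)
          exact Fin.ext (by omega)
        by_contra hadj
        rw [Bool.not_eq_false] at hadj
        have hij : i ≠ j := by
          intro he
          rw [he, hG j] at hadj
          exact Bool.noConfusion hadj
        exact hj (hbad (i, j) (by
          rw [hE]
          simp only [Finset.mem_filter, Finset.mem_univ, true_and]
          exact ⟨hadj, hij⟩) hσi)
      have hFeq : F (Finset.univ.filter fun i => σ i ≠ 0)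
          = F (Finset.univ.filter fun i => σ i = 1) := by
        have hmm : m (Finset.univ.filter fun i => σ i ≠ 0)
            = m (Finset.univ.filter fun i => σ i = 1) := by
          rw [hm]
          dsimp only
          rw [cls_core_induce9, cls_core_induce9, filter_core_eq9 G hsub hprop]
        simp only [hF, hmm]
      rw [hFeq, sub_self, abs_zero]
      exact Finset.sum_nonneg fun z _ => by split <;> norm_num
  refine le_trans (Finset.abs_sum_le_sum_abs _ _) ?_
  refine le_trans (Finset.sum_le_sum fun σ _ => hstep σ) ?_
  rw [Finset.sum_comm]
  have hpair : ∀ z ∈ E, ∑ σ : Fin G.n → Fin 3,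
      (∏ i, v (σ i)) * (if σ z.1 = 2 ∧ σ z.2 ≠ 0 then 1 else 0) = (p - q) * p := by
    intro z hz
    rw [hE] at hz
    simp only [Finset.mem_filter, Finset.mem_univ, true_and] at hz
    refine (badPair9 v hvsum hz.2).trans ?_
    rw [Fin.sum_univ_three, Fin.sum_univ_three]
    norm_num [hv, hd10, hd20, hd21, hd02, hd12, Matrix.cons_val_two, Matrix.tail_cons, Matrix.head_cons]
  rw [Finset.sum_congr rfl hpair, Finset.sum_const, hE, card_orderedEdges9, nsmul_eq_mul]
  apply le_of_eq
  push_cast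
  ring

end Stmt9Main
/-- For a finite loopless graph `G` with `e` edges and `0 < q ≤ p ≤ 1`,
`d_TV(law of S_p(G), law of S_q(G)) ≤ 2·e·p·(p − q)`; equivalently, for `p, q ∈ (0,1]`
the distance is at most `2·p·q·e·max(p/q − 1, q/p − 1)`. -/
theorem stmt9 (G : FinGraph) (hG : G.Loopless) :
    (∀ p q : ℝ, 0 < q → q ≤ p → p ≤ 1 →
      dTV (pSampleLaw G p) (pSampleLaw G q) ≤ 2 * (G.e : ℝ) * p * (p - q)) ∧
    (∀ p q : ℝ, 0 < p → p ≤ 1 → 0 < q → q ≤ 1 →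
      dTV (pSampleLaw G p) (pSampleLaw G q) ≤
        2 * p * q * (G.e : ℝ) * max (p / q - 1) (q / p - 1)) := by
  constructor
  · exact fun p q hq hqp hp1 => main_bound9 G hG hq hqp hp1
  · intro p q hp hp1 hq hq1
    rcases le_total q p with h | h
    · have hb := main_bound9 G hG hq h hp1
      have hmax : max (p / q - 1) (q / p - 1) = p / q - 1 := by
        apply max_eq_left
        have h1 : q / p ≤ 1 := (div_le_one hp).mpr h
        have h2 : 1 ≤ p / q := (one_le_div hq).mpr h
        linarith
      rw [hmax]
      refine hb.trans (le_of_eq ?_)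
      field_simp
    · have hb := main_bound9 G hG hp h hq1
      have hmax : max (p / q - 1) (q / p - 1) = q / p - 1 := by
        apply max_eq_right
        have h1 : p / q ≤ 1 := (div_le_one hq).mpr h
        have h2 : 1 ≤ q / p := (one_le_div hp).mpr h
        linarith
      rw [hmax, dTV_comm9]
      refine hb.trans (le_of_eq ?_)
      field_simp
end

section
/- For any finite graph G with e(G) ≥ 1 non-loop edges and any k > 0, (1/e(G))·∑_i d_i·1[d_i > k√(e(G))] ≤ (2√2/k)·(d²̄(G)/d̄(G)²)·√(ρ(G)). Consequently, if (G_j) is a sequence of finite graphs with e(G_j) → ∞ and (d²̄(G_j)/d̄(G_j)²)·√(ρ(G_j)) → 0 as j → ∞, then (G_j) is uniformly sampling regular. -/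
open Filter Finset
open scoped Classical ENNReal

lemma handshake (G : FinGraph) : ∑ i : Fin G.n, G.deg i = 2 * G.e := by
  have h1 : ∑ i : Fin G.n, G.deg i
      = ((univ : Finset (Fin G.n × Fin G.n)).filter
          (fun q => G.adj q.1 q.2 = true ∧ q.2 ≠ q.1)).card := by
    rw [Finset.card_filter, Fintype.sum_prod_type]
    simp only [FinGraph.deg, Finset.card_filter]
  have h2 : ((univ : Finset (Fin G.n × Fin G.n)).filter
          (fun q => G.adj q.1 q.2 = true ∧ q.2 ≠ q.1))
      = ((univ : Finset (Fin G.n × Fin G.n)).filter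
          (fun q => G.adj q.1 q.2 = true ∧ q.1 < q.2)) ∪
        ((univ : Finset (Fin G.n × Fin G.n)).filter
          (fun q => G.adj q.1 q.2 = true ∧ q.2 < q.1)) := by
    rw [← Finset.filter_or]
    apply Finset.filter_congr
    intro q _
    constructor
    · rintro ⟨ha, hne⟩
      rcases hne.lt_or_gt with h | h
      · exact Or.inr ⟨ha, h⟩
      · exact Or.inl ⟨ha, h⟩
    · rintro (⟨ha, h⟩ | ⟨ha, h⟩)
      · exact ⟨ha, h.ne'⟩
      · exact ⟨ha, h.ne⟩
  have h3 : ((univ : Finset (Fin G.n × Fin G.n)).filter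
        (fun q => G.adj q.1 q.2 = true ∧ q.2 < q.1)).card = G.e := by
    refine Finset.card_bij' (fun q _ => q.swap) (fun q _ => q.swap) ?_ ?_ ?_ ?_
    · intro q hq
      simp only [Finset.mem_filter, Finset.mem_univ, true_and] at hq ⊢
      exact ⟨(G.symm _ _) ▸ hq.1, hq.2⟩
    · intro q hq
      simp only [Finset.mem_filter, Finset.mem_univ, true_and] at hq ⊢
      exact ⟨(G.symm _ _) ▸ hq.1, hq.2⟩
    · intro q _; rfl
    · intro q _; rfl
  have hdisj : Disjoint
      ((univ : Finset (Fin G.n × Fin G.n)).filter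
        (fun q => G.adj q.1 q.2 = true ∧ q.1 < q.2))
      ((univ : Finset (Fin G.n × Fin G.n)).filter
        (fun q => G.adj q.1 q.2 = true ∧ q.2 < q.1)) := by
    rw [Finset.disjoint_left]
    intro q h1 h2
    simp only [Finset.mem_filter] at h1 h2
    exact absurd h2.2.2 (lt_asymm h1.2.2)
  rw [h1, h2, Finset.card_union_of_disjoint hdisj, h3]
  simp [FinGraph.e]; ring

lemma stmt10_main (G : FinGraph) (hE : 1 ≤ G.e) (k : ℝ) (hk : 0 < k) :
    (1 / (G.e : ℝ)) * tailDegSum G k ≤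
      (2 * Real.sqrt 2 / k) * (G.sqAvgDeg / G.avgDeg ^ 2) * Real.sqrt G.density := by
  have hn : 0 < G.n := by
    obtain ⟨q, -⟩ := Finset.card_pos.mp (show 0 < G.e from hE)
    exact q.1.pos
  have hnR : (0:ℝ) < (G.n : ℝ) := by exact_mod_cast hn
  have heR : (1:ℝ) ≤ (G.e : ℝ) := by exact_mod_cast hE
  have heR0 : (0:ℝ) < (G.e : ℝ) := lt_of_lt_of_le one_pos heR
  set se := Real.sqrt (G.e : ℝ) with hse_def
  have hse0 : 0 < se := Real.sqrt_pos.mpr heR0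
  have hse2 : se ^ 2 = (G.e : ℝ) := Real.sq_sqrt heR0.le
  have hs2 : Real.sqrt 2 ^ 2 = 2 := Real.sq_sqrt (by norm_num)
  have hs2pos : (0:ℝ) < Real.sqrt 2 := Real.sqrt_pos.mpr (by norm_num)
  set S2 : ℝ := ∑ i : Fin G.n, (G.deg i : ℝ) ^ 2 with hS2_def
  have hsum : ∑ i : Fin G.n, (G.deg i : ℝ) = 2 * (G.e : ℝ) := by
    exact_mod_cast congrArg (Nat.cast : ℕ → ℝ) (handshake G)
  have havg : G.avgDeg = 2 * (G.e : ℝ) / (G.n : ℝ) := by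
    rw [FinGraph.avgDeg, hsum]; ring
  have hsq : G.sqAvgDeg = S2 / (G.n : ℝ) := by
    rw [FinGraph.sqAvgDeg]; ring
  have hdens : Real.sqrt G.density = Real.sqrt 2 * se / (G.n : ℝ) := by
    have : G.density = (Real.sqrt 2 * se / (G.n : ℝ)) ^ 2 := by
      rw [FinGraph.density, div_pow, mul_pow, hs2, hse2]
    rw [this, Real.sqrt_sq (by positivity)]
  -- Markov bound on the tail
  have htail : tailDegSum G k ≤ S2 / (k * se) := by
    rw [tailDegSum, hS2_def, Finset.sum_div]
    apply Finset.sum_le_sum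
    intro i _
    by_cases h : k * se < (G.deg i : ℝ)
    · rw [if_pos h]
      rw [le_div_iff₀ (by positivity)]
      have h0 : (0:ℝ) ≤ (G.deg i : ℝ) := by positivity
      nlinarith
    · rw [if_neg h]; positivity
  have hL : (1 / (G.e : ℝ)) * tailDegSum G k ≤ S2 / (k * (G.e : ℝ) * se) := by
    have := mul_le_mul_of_nonneg_left htail (by positivity : (0:ℝ) ≤ 1 / (G.e : ℝ))
    calc (1 / (G.e : ℝ)) * tailDegSum G k ≤ (1 / (G.e : ℝ)) * (S2 / (k * se)) := this
      _ = S2 / (k * (G.e : ℝ) * se) := by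
          rw [one_div, inv_mul_eq_div, div_div]
          congr 1; ring
  refine hL.trans (le_of_eq ?_)
  rw [havg, hsq, hdens]
  field_simp
  linear_combination (-S2 * Real.sqrt 2 ^ 2) * hse2 +
    (-S2 * (G.e:ℝ)) * hs2

lemma stmt10_zero (G : FinGraph) (hE : G.e = 0) (k : ℝ) :
    (1 / (G.e : ℝ)) * tailDegSum G k = 0 := by
  have hdeg : ∀ i : Fin G.n, G.deg i = 0 := by
    have h := handshake G
    rw [hE, Nat.mul_zero] at h
    intro i
    exact Finset.sum_eq_zero_iff.mp h i (Finset.mem_univ i)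
  have : tailDegSum G k = 0 := by
    rw [tailDegSum]
    apply Finset.sum_eq_zero
    intro i _
    rw [hdeg i]
    simp
  rw [this, mul_zero]

/-- For any finite graph `G` with `e(G) ≥ 1` and any `k > 0`,
`(1/e(G))·∑_i d_i·1[d_i > k√(e(G))] ≤ (2√2/k)·(d²̄(G)/d̄(G)²)·√(ρ(G))`. Consequently, a
sequence of finite graphs with `e(G_j) → ∞` and `(d²̄(G_j)/d̄(G_j)²)·√(ρ(G_j)) → 0` is
uniformly sampling regular. -/
theorem stmt10 :
    (∀ G : FinGraph, 1 ≤ G.e → ∀ k : ℝ, 0 < k →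
      (1 / (G.e : ℝ)) * tailDegSum G k ≤
        (2 * Real.sqrt 2 / k) * (G.sqAvgDeg / G.avgDeg ^ 2) * Real.sqrt G.density) ∧
    (∀ G : ℕ → FinGraph,
      Tendsto (fun j => ((G j).e : ℝ)) atTop atTop →
      Tendsto (fun j => ((G j).sqAvgDeg / (G j).avgDeg ^ 2) * Real.sqrt ((G j).density))
        atTop (nhds 0) →
      UniformlySamplingRegular G) := by
  have main : ∀ G : FinGraph, 1 ≤ G.e → ∀ k : ℝ, 0 < k →
      (1 / (G.e : ℝ)) * tailDegSum G k ≤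
        (2 * Real.sqrt 2 / k) * (G.sqAvgDeg / G.avgDeg ^ 2) * Real.sqrt G.density :=
    stmt10_main
  refine ⟨main, ?_⟩
  intro G _hE hF ε hε
  set f : ℕ → ℝ := fun j =>
    ((G j).sqAvgDeg / (G j).avgDeg ^ 2) * Real.sqrt ((G j).density) with hf_def
  obtain ⟨C, hC⟩ := hF.bddAbove_range
  have hC' : ∀ j, f j ≤ max C 0 := fun j =>
    le_trans (hC (Set.mem_range_self j)) (le_max_left _ _)
  set C' := max C 0 with hC'_def
  have hC'0 : 0 ≤ C' := le_max_right _ _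
  refine ⟨2 * Real.sqrt 2 * (C' + 1) / ε, by positivity, ?_⟩
  intro j
  set k := 2 * Real.sqrt 2 * (C' + 1) / ε with hk_def
  have hs2pos : (0:ℝ) < Real.sqrt 2 := Real.sqrt_pos.mpr (by norm_num)
  have hkpos : 0 < k := by positivity
  by_cases hE : 1 ≤ (G j).e
  · have h1 := stmt10_main (G j) hE k hkpos
    have h2 : (2 * Real.sqrt 2 / k) * f j ≤ (2 * Real.sqrt 2 / k) * C' :=
      mul_le_mul_of_nonneg_left (hC' j) (by positivity)
    have h3 : (2 * Real.sqrt 2 / k) * C' < ε := by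
      rw [hk_def]
      rw [div_div_eq_mul_div, div_mul_eq_mul_div, div_lt_iff₀ (by positivity)]
      nlinarith
    calc (1 / ((G j).e : ℝ)) * tailDegSum (G j) k
        ≤ (2 * Real.sqrt 2 / k) * ((G j).sqAvgDeg / (G j).avgDeg ^ 2) *
            Real.sqrt ((G j).density) := h1
      _ = (2 * Real.sqrt 2 / k) * f j := by rw [hf_def]; ring
      _ ≤ (2 * Real.sqrt 2 / k) * C' := h2
      _ < ε := h3
  · have hE0 : (G j).e = 0 := by omega
    rw [stmt10_zero (G j) hE0 k]
    exact hε
end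

section
/- Let (G_j) be a sequence of finite graphs with e(G_j) → ∞ and ℓ(G_j) = O(√(e(G_j))) as j → ∞. Then there exists a subsequence (G_{j_k}) such that for every r > 0 the laws of the samplings S_{r/√(2e(G_{j_k}))}(G_{j_k}), viewed as probability measures on the countable set of isomorphism classes of finite graphs without isolated vertices, converge weakly as k → ∞; i.e., every such sequence has a subsequence that is sampling convergent. -/
open Filter Finset
open scoped Classical ENNReal

section Binom
variable {α : Type*} [DecidableEq α]

lemma B0 (P : Finset α) (a b : ℝ) :
    ∑ S ∈ P.powerset, a ^ S.card * b ^ (P.card - S.card) = (a + b) ^ P.card := by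
  rw [← Finset.prod_const, Finset.prod_add]
  refine Finset.sum_congr rfl fun S hS => ?_
  rw [Finset.prod_const, Finset.prod_const, Finset.card_sdiff_of_subset (Finset.mem_powerset.mp hS)]

lemma EXPA (P A : Finset α) (hA : A ⊆ P) (u v : ℝ) :
    ∑ S ∈ P.powerset, (if A ⊆ S then u ^ S.card * v ^ (P.card - S.card) else 0)
      = u ^ A.card * (u + v) ^ (P.card - A.card) := by
  rw [Finset.sum_ite, Finset.sum_const_zero, add_zero]
  have hbij : ∑ S ∈ P.powerset.filter (fun S => A ⊆ S), u ^ S.card * v ^ (P.card - S.card)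
      = ∑ T ∈ (P \ A).powerset, u ^ (A.card + T.card) * v ^ ((P \ A).card - T.card) := by
    refine Finset.sum_nbij' (fun S => S \ A) (fun T => A ∪ T) ?_ ?_ ?_ ?_ ?_
    · intro S hS
      simp only [Finset.mem_filter, Finset.mem_powerset] at hS
      exact Finset.mem_powerset.mpr (Finset.sdiff_subset_sdiff hS.1 le_rfl)
    · intro T hT
      simp only [Finset.mem_powerset] at hT
      simp only [Finset.mem_filter, Finset.mem_powerset]
      exact ⟨Finset.union_subset hA (hT.trans Finset.sdiff_subset), Finset.subset_union_left⟩
    · intro S hS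
      simp only [Finset.mem_filter, Finset.mem_powerset] at hS
      show A ∪ (S \ A) = S
      exact Finset.union_sdiff_of_subset hS.2
    · intro T hT
      simp only [Finset.mem_powerset] at hT
      have : Disjoint A T := (Finset.sdiff_disjoint.mono_left hT).symm
      show (A ∪ T) \ A = T
      exact Finset.union_sdiff_cancel_left this
    · intro S hS
      simp only [Finset.mem_filter, Finset.mem_powerset] at hS
      have h1 : (S \ A).card = S.card - A.card := Finset.card_sdiff_of_subset hS.2
      have h2 : A.card ≤ S.card := Finset.card_le_card hS.2
      have h3 : A.card + (S \ A).card = S.card := by omega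
      have h4 : (P \ A).card = P.card - A.card := Finset.card_sdiff_of_subset hA
      have h5 : S.card ≤ P.card := Finset.card_le_card hS.1
      have h6 : (P \ A).card - (S \ A).card = P.card - S.card := by omega
      rw [h3, h6]
  rw [hbij]
  have : ∀ T ∈ (P \ A).powerset, u ^ (A.card + T.card) * v ^ ((P \ A).card - T.card)
      = u ^ A.card * (u ^ T.card * v ^ ((P \ A).card - T.card)) := by
    intro T _; rw [pow_add]; ring
  rw [Finset.sum_congr rfl this, ← Finset.mul_sum, B0, Finset.card_sdiff_of_subset hA]

lemma THIN (P S : Finset α) (hS : S ⊆ P) (q u : ℝ) :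
    ∑ S' ∈ P.powerset, (if S ⊆ S' then
        (q ^ S'.card * (1 - q) ^ (P.card - S'.card)) * (u ^ S.card * (1 - u) ^ (S'.card - S.card))
      else 0)
      = (q * u) ^ S.card * (1 - q * u) ^ (P.card - S.card) := by
  rw [Finset.sum_ite, Finset.sum_const_zero, add_zero]
  have hbij : ∑ S' ∈ P.powerset.filter (fun S' => S ⊆ S'),
        (q ^ S'.card * (1 - q) ^ (P.card - S'.card)) * (u ^ S.card * (1 - u) ^ (S'.card - S.card))
      = ∑ T ∈ (P \ S).powerset,
        (q * u) ^ S.card * ((q * (1 - u)) ^ T.card * (1 - q) ^ ((P \ S).card - T.card)) := by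
    refine Finset.sum_nbij' (fun S' => S' \ S) (fun T => S ∪ T) ?_ ?_ ?_ ?_ ?_
    · intro S' hS'
      simp only [Finset.mem_filter, Finset.mem_powerset] at hS'
      exact Finset.mem_powerset.mpr (Finset.sdiff_subset_sdiff hS'.1 le_rfl)
    · intro T hT
      simp only [Finset.mem_powerset] at hT
      simp only [Finset.mem_filter, Finset.mem_powerset]
      exact ⟨Finset.union_subset hS (hT.trans Finset.sdiff_subset), Finset.subset_union_left⟩
    · intro S' hS'
      simp only [Finset.mem_filter, Finset.mem_powerset] at hS'
      show S ∪ (S' \ S) = S'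
      exact Finset.union_sdiff_of_subset hS'.2
    · intro T hT
      simp only [Finset.mem_powerset] at hT
      have : Disjoint S T := (Finset.sdiff_disjoint.mono_left hT).symm
      show (S ∪ T) \ S = T
      exact Finset.union_sdiff_cancel_left this
    · intro S' hS'
      simp only [Finset.mem_filter, Finset.mem_powerset] at hS'
      have h2 : S.card ≤ S'.card := Finset.card_le_card hS'.2
      have h1 : (S' \ S).card = S'.card - S.card := Finset.card_sdiff_of_subset hS'.2
      have h3 : S.card + (S' \ S).card = S'.card := by omega
      have h4 : (P \ S).card = P.card - S.card := Finset.card_sdiff_of_subset hS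
      have h5 : S'.card ≤ P.card := Finset.card_le_card hS'.1
      have h6 : (P \ S).card - (S' \ S).card = P.card - S'.card := by omega
      obtain ⟨c, hc⟩ : ∃ c, S'.card = S.card + c := ⟨S'.card - S.card, by omega⟩
      rw [h6, h1, hc, Nat.add_sub_cancel_left, pow_add, mul_pow, mul_pow]
      ring
  rw [hbij, ← Finset.mul_sum, B0, Finset.card_sdiff_of_subset hS]
  have : q * (1 - u) + (1 - q) = 1 - q * u := by ring
  rw [this]
end Binom

namespace Stmt14Aux

open FinGraph

/-- If `K` embeds onto `A` inside `G`, then `K` has the same class as `G.induce A`. -/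
lemma cls_eq_induce (G : FinGraph) (A : Finset (Fin G.n)) (K : FinGraph)
    (f : Fin K.n → Fin G.n) (hinj : Function.Injective f)
    (hadj : ∀ i j, K.adj i j = G.adj (f i) (f j))
    (himg : ∀ i, f i ∈ A) (hcard : A.card = K.n) : K.cls = (G.induce A).cls := by
  apply Quot.sound
  have hAn : (G.induce A).n = A.card := rfl
  let e : Fin K.n → Fin A.card := fun i => (A.orderIsoOfFin rfl).symm ⟨f i, himg i⟩
  have heinj : Function.Injective e := by
    intro i j hij
    apply hinj
    have h2 := congrArg (fun x => ((A.orderIsoOfFin rfl) x).1) hij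
    simpa only [e, OrderIso.apply_symm_apply] using h2
  have hbij : Function.Bijective e :=
    (Fintype.bijective_iff_injective_and_card e).mpr ⟨heinj, by simp [hcard]⟩
  refine ⟨Equiv.ofBijective e hbij, fun i j => ?_⟩
  have hval : ∀ i, ((A.orderIsoOfFin rfl) (e i)).1 = f i := by
    intro i; simp [e]
  show K.adj i j = (G.induce A).adj (e i) (e j)
  show K.adj i j = G.adj ((A.orderIsoOfFin rfl) (e i)).1 ((A.orderIsoOfFin rfl) (e j)).1
  rw [hval, hval, hadj]

/-- The set of non-isolated vertices of `S` within `G.induce S`. -/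
def NS (G : FinGraph) (S : Finset (Fin G.n)) : Finset (Fin G.n) :=
  S.filter (fun i => ∃ j ∈ S, G.adj i j = true)

lemma master (G : FinGraph) (S : Finset (Fin G.n)) :
    ((G.induce S).core).cls = (G.induce (NS G S)).cls := by
  set T : Finset (Fin (G.induce S).n) :=
    ((univ : Finset (Fin (G.induce S).n)).filter (fun i => ∃ j, (G.induce S).adj i j = true))
    with hT
  have hcore : (G.induce S).core = (G.induce S).induce T := rfl
  rw [hcore]
  set g : Fin (G.induce S).n → Fin G.n := fun a => ((S.orderIsoOfFin rfl) a).1 with hg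
  have hginj : Function.Injective g := by
    intro a b hab
    exact (S.orderIsoOfFin rfl).injective (Subtype.val_injective hab)
  have hgmem : ∀ a, g a ∈ S := fun a => ((S.orderIsoOfFin rfl) a).2
  set f : Fin ((G.induce S).induce T).n → Fin G.n :=
    fun i => g ((T.orderIsoOfFin rfl) i).1 with hf
  apply cls_eq_induce G (NS G S) _ f
  · intro i j hij
    exact (T.orderIsoOfFin rfl).injective (Subtype.val_injective (hginj hij))
  · intro i j; rfl
  · intro i
    simp only [NS, Finset.mem_filter]
    set a : Fin (G.induce S).n := ((T.orderIsoOfFin rfl) i).1 with ha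
    have haT : a ∈ T := ((T.orderIsoOfFin rfl) i).2
    refine ⟨hgmem a, ?_⟩
    rw [hT, Finset.mem_filter] at haT
    obtain ⟨-, b, hb⟩ := haT
    exact ⟨g b, hgmem b, hb⟩
  · -- card: NS G S = T.image g
    have himg : NS G S = T.image g := by
      ext x
      simp only [NS, Finset.mem_filter, Finset.mem_image]
      constructor
      · rintro ⟨hxS, j, hjS, hadj⟩
        refine ⟨(S.orderIsoOfFin rfl).symm ⟨x, hxS⟩, ?_,
          congrArg Subtype.val ((S.orderIsoOfFin rfl).apply_symm_apply ⟨x, hxS⟩)⟩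
        rw [hT]
        apply Finset.mem_filter.mpr
        refine ⟨Finset.mem_univ _, (S.orderIsoOfFin rfl).symm ⟨j, hjS⟩, ?_⟩
        show G.adj ((S.orderIsoOfFin rfl) _).1 ((S.orderIsoOfFin rfl) _).1 = true
        simpa using hadj
      · rintro ⟨a, haT, rfl⟩
        refine ⟨hgmem a, ?_⟩
        rw [hT, Finset.mem_filter] at haT
        obtain ⟨-, b, hb⟩ := haT
        exact ⟨g b, hgmem b, hb⟩
    rw [himg, Finset.card_image_of_injective _ hginj]
    rfl

lemma ns_stab (G : FinGraph) (S S' : Finset (Fin G.n)) (h1 : NS G S' ⊆ S) (h2 : S ⊆ S') :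
    NS G S = NS G S' := by
  ext x
  simp only [NS, Finset.mem_filter]
  constructor
  · rintro ⟨hxS, j, hjS, hadj⟩
    exact ⟨h2 hxS, j, h2 hjS, hadj⟩
  · rintro ⟨hxS', j, hjS', hadj⟩
    have hx : x ∈ NS G S' := Finset.mem_filter.mpr ⟨hxS', j, hjS', hadj⟩
    refine ⟨h1 hx, j, ?_, hadj⟩
    have hj : j ∈ NS G S' := Finset.mem_filter.mpr ⟨hjS', x, hxS', by rw [← G.symm]; exact hadj⟩
    exact h1 hj

lemma core_cls_stab (G : FinGraph) (S S' : Finset (Fin G.n)) (h1 : NS G S' ⊆ S) (h2 : S ⊆ S') :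
    ((G.induce S).core).cls = ((G.induce S').core).cls := by
  rw [master, master, ns_stab G S S' h1 h2]

end Stmt14Aux

namespace Stmt14Aux
open FinGraph

variable (G : FinGraph)

def opairs : Finset (Fin G.n × Fin G.n) :=
  (univ : Finset (Fin G.n × Fin G.n)).filter (fun p => G.adj p.1 p.2 = true ∧ p.1 ≠ p.2)

lemma card_opairs : (opairs G).card = 2 * G.e := by
  classical
  have hsplit : opairs G
      = ((univ : Finset (Fin G.n × Fin G.n)).filter
          (fun p => G.adj p.1 p.2 = true ∧ p.1 < p.2))
        ∪ (((univ : Finset (Fin G.n × Fin G.n)).filter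
          (fun p => G.adj p.1 p.2 = true ∧ p.1 < p.2)).image Prod.swap) := by
    ext p
    simp only [opairs, Finset.mem_union, Finset.mem_filter, Finset.mem_univ, true_and,
      Finset.mem_image]
    constructor
    · rintro ⟨hadj, hne⟩
      rcases lt_or_gt_of_ne hne with h | h
      · exact Or.inl ⟨hadj, h⟩
      · refine Or.inr ⟨(p.2, p.1), ⟨⟨?_, h⟩, ?_⟩⟩
        · rw [← G.symm]; exact hadj
        · simp [Prod.swap]
    · rintro (⟨hadj, hlt⟩ | ⟨q, ⟨hadj, hlt⟩, rfl⟩)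
      · exact ⟨hadj, ne_of_lt hlt⟩
      · exact ⟨by rw [← G.symm]; exact hadj, ne_of_gt hlt⟩
  have hdisj : Disjoint
      ((univ : Finset (Fin G.n × Fin G.n)).filter
          (fun p => G.adj p.1 p.2 = true ∧ p.1 < p.2))
      (((univ : Finset (Fin G.n × Fin G.n)).filter
          (fun p => G.adj p.1 p.2 = true ∧ p.1 < p.2)).image Prod.swap) := by
    rw [Finset.disjoint_left]
    rintro p hp hq
    simp only [Finset.mem_filter, Finset.mem_univ, true_and] at hp
    simp only [Finset.mem_image, Finset.mem_filter, Finset.mem_univ, true_and] at hq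
    obtain ⟨q, ⟨-, hlt⟩, rfl⟩ := hq
    have h2 : q.2 < q.1 := hp.2
    exact absurd hlt (not_lt.mpr h2.le)
  rw [hsplit, Finset.card_union_of_disjoint hdisj,
    Finset.card_image_of_injective _ Prod.swap_injective]
  show G.e + G.e = 2 * G.e
  ring

def opairsIn (S : Finset (Fin G.n)) : Finset (Fin G.n × Fin G.n) :=
  (univ : Finset (Fin G.n × Fin G.n)).filter
    (fun p => G.adj p.1 p.2 = true ∧ p.1 ≠ p.2 ∧ p.1 ∈ S ∧ p.2 ∈ S)

lemma card_NS_le (S : Finset (Fin G.n)) :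
    (NS G S).card ≤ (S.filter (fun i => G.adj i i = true)).card + (opairsIn G S).card := by
  classical
  calc (NS G S).card
      ≤ ((S.filter (fun i => G.adj i i = true)) ∪ (opairsIn G S).image Prod.fst).card := by
        apply Finset.card_le_card
        intro x hx
        simp only [NS, Finset.mem_filter] at hx
        obtain ⟨hxS, j, hjS, hadj⟩ := hx
        simp only [Finset.mem_union, Finset.mem_filter, Finset.mem_image]
        by_cases hji : j = x
        · subst hji; exact Or.inl ⟨hxS, hadj⟩
        · refine Or.inr ⟨(x, j), ?_, rfl⟩
          simp only [opairsIn, Finset.mem_filter, Finset.mem_univ, true_and]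
          exact ⟨hadj, fun h => hji h.symm, hxS, hjS⟩
    _ ≤ _ := by
        refine (Finset.card_union_le _ _).trans ?_
        exact add_le_add le_rfl (Finset.card_image_le)

lemma sumW (q : ℝ) :
    ∑ S ∈ (univ : Finset (Fin G.n)).powerset, q ^ S.card * (1 - q) ^ (G.n - S.card) = 1 := by
  have hP : (univ : Finset (Fin G.n)).card = G.n := by simp
  calc ∑ S ∈ (univ : Finset (Fin G.n)).powerset, q ^ S.card * (1 - q) ^ (G.n - S.card)
      = ∑ S ∈ (univ : Finset (Fin G.n)).powerset,
          q ^ S.card * (1 - q) ^ ((univ : Finset (Fin G.n)).card - S.card) := by rw [hP]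
    _ = (q + (1 - q)) ^ (univ : Finset (Fin G.n)).card := B0 _ _ _
    _ = 1 := by norm_num

lemma expLoop (q : ℝ) :
    ∑ S ∈ (univ : Finset (Fin G.n)).powerset,
        (q ^ S.card * (1 - q) ^ (G.n - S.card)) * ((S.filter (fun i => G.adj i i = true)).card : ℝ)
      = q * (G.loops : ℝ) := by
  have hP : (univ : Finset (Fin G.n)).card = G.n := by simp
  have hcard : ∀ S ∈ (univ : Finset (Fin G.n)).powerset,
      ((S.filter (fun i => G.adj i i = true)).card : ℝ)
        = ∑ i ∈ (univ : Finset (Fin G.n)).filter (fun i => G.adj i i = true),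
            (if ({i} : Finset (Fin G.n)) ⊆ S then (1 : ℝ) else 0) := by
    intro S _
    have : S.filter (fun i => G.adj i i = true)
        = ((univ : Finset (Fin G.n)).filter (fun i => G.adj i i = true)).filter (fun i => i ∈ S) := by
      ext i
      simp only [Finset.mem_filter, Finset.mem_univ, true_and]
      tauto
    rw [this, Finset.card_filter]
    push_cast
    refine Finset.sum_congr rfl fun i _ => ?_
    simp [Finset.singleton_subset_iff]
  calc ∑ S ∈ (univ : Finset (Fin G.n)).powerset,
        (q ^ S.card * (1 - q) ^ (G.n - S.card)) * ((S.filter (fun i => G.adj i i = true)).card : ℝ)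
      = ∑ S ∈ (univ : Finset (Fin G.n)).powerset,
          ∑ i ∈ (univ : Finset (Fin G.n)).filter (fun i => G.adj i i = true),
            (if ({i} : Finset (Fin G.n)) ⊆ S then q ^ S.card * (1 - q) ^ ((univ : Finset (Fin G.n)).card - S.card) else 0) := by
        refine Finset.sum_congr rfl fun S hS => ?_
        rw [hcard S hS, hP, Finset.mul_sum]
        refine Finset.sum_congr rfl fun i _ => ?_
        rw [mul_ite, mul_one, mul_zero]
    _ = ∑ i ∈ (univ : Finset (Fin G.n)).filter (fun i => G.adj i i = true),
          ∑ S ∈ (univ : Finset (Fin G.n)).powerset,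
            (if ({i} : Finset (Fin G.n)) ⊆ S then q ^ S.card * (1 - q) ^ ((univ : Finset (Fin G.n)).card - S.card) else 0) :=
        Finset.sum_comm
    _ = ∑ i ∈ (univ : Finset (Fin G.n)).filter (fun i => G.adj i i = true),
          q ^ ({i} : Finset (Fin G.n)).card * (q + (1 - q)) ^ ((univ : Finset (Fin G.n)).card - ({i} : Finset (Fin G.n)).card) := by
        refine Finset.sum_congr rfl fun i _ => ?_
        exact EXPA _ _ (by simp) _ _
    _ = q * (G.loops : ℝ) := by
        have hconst : ∀ i ∈ (univ : Finset (Fin G.n)).filter (fun i => G.adj i i = true),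
            q ^ ({i} : Finset (Fin G.n)).card * (q + (1 - q)) ^ ((univ : Finset (Fin G.n)).card - ({i} : Finset (Fin G.n)).card) = q := by
          intro i _; norm_num
        rw [Finset.sum_congr rfl hconst, Finset.sum_const, nsmul_eq_mul, mul_comm]
        rfl

lemma expPair (q : ℝ) :
    ∑ S ∈ (univ : Finset (Fin G.n)).powerset,
        (q ^ S.card * (1 - q) ^ (G.n - S.card)) * ((opairsIn G S).card : ℝ)
      = q ^ 2 * (2 * (G.e : ℝ)) := by
  have hP : (univ : Finset (Fin G.n)).card = G.n := by simp
  have hcard : ∀ S ∈ (univ : Finset (Fin G.n)).powerset,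
      ((opairsIn G S).card : ℝ)
        = ∑ p ∈ opairs G, (if ({p.1, p.2} : Finset (Fin G.n)) ⊆ S then (1 : ℝ) else 0) := by
    intro S _
    have : opairsIn G S = (opairs G).filter (fun p => p.1 ∈ S ∧ p.2 ∈ S) := by
      ext p
      simp only [opairsIn, opairs, Finset.mem_filter, Finset.mem_univ, true_and]
      tauto
    rw [this, Finset.card_filter]
    push_cast
    refine Finset.sum_congr rfl fun p _ => ?_
    congr 1
    simp [Finset.insert_subset_iff, Finset.singleton_subset_iff]
  calc ∑ S ∈ (univ : Finset (Fin G.n)).powerset,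
        (q ^ S.card * (1 - q) ^ (G.n - S.card)) * ((opairsIn G S).card : ℝ)
      = ∑ S ∈ (univ : Finset (Fin G.n)).powerset, ∑ p ∈ opairs G,
            (if ({p.1, p.2} : Finset (Fin G.n)) ⊆ S then q ^ S.card * (1 - q) ^ ((univ : Finset (Fin G.n)).card - S.card) else 0) := by
        refine Finset.sum_congr rfl fun S hS => ?_
        rw [hcard S hS, hP, Finset.mul_sum]
        refine Finset.sum_congr rfl fun p _ => ?_
        rw [mul_ite, mul_one, mul_zero]
    _ = ∑ p ∈ opairs G, ∑ S ∈ (univ : Finset (Fin G.n)).powerset,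
            (if ({p.1, p.2} : Finset (Fin G.n)) ⊆ S then q ^ S.card * (1 - q) ^ ((univ : Finset (Fin G.n)).card - S.card) else 0) :=
        Finset.sum_comm
    _ = ∑ p ∈ opairs G,
          q ^ ({p.1, p.2} : Finset (Fin G.n)).card * (q + (1 - q)) ^ ((univ : Finset (Fin G.n)).card - ({p.1, p.2} : Finset (Fin G.n)).card) := by
        refine Finset.sum_congr rfl fun p _ => ?_
        exact EXPA _ _ (by simp) _ _
    _ = ∑ p ∈ opairs G, q ^ 2 := by
        refine Finset.sum_congr rfl fun p hp => ?_
        simp only [opairs, Finset.mem_filter, Finset.mem_univ, true_and] at hp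
        rw [Finset.card_insert_of_notMem (by simp [hp.2]), Finset.card_singleton]
        norm_num
    _ = q ^ 2 * (2 * (G.e : ℝ)) := by
        rw [Finset.sum_const, card_opairs, nsmul_eq_mul]
        push_cast
        ring

lemma expNS (q : ℝ) (hq0 : 0 ≤ q) (hq1 : q ≤ 1) :
    ∑ S ∈ (univ : Finset (Fin G.n)).powerset,
        (q ^ S.card * (1 - q) ^ (G.n - S.card)) * ((NS G S).card : ℝ)
      ≤ q * (G.loops : ℝ) + q ^ 2 * (2 * (G.e : ℝ)) := by
  have hw : ∀ S : Finset (Fin G.n), 0 ≤ q ^ S.card * (1 - q) ^ (G.n - S.card) := by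
    intro S
    exact mul_nonneg (pow_nonneg hq0 _) (pow_nonneg (by linarith) _)
  calc ∑ S ∈ (univ : Finset (Fin G.n)).powerset,
        (q ^ S.card * (1 - q) ^ (G.n - S.card)) * ((NS G S).card : ℝ)
      ≤ ∑ S ∈ (univ : Finset (Fin G.n)).powerset,
          ((q ^ S.card * (1 - q) ^ (G.n - S.card)) * ((S.filter (fun i => G.adj i i = true)).card : ℝ)
          + (q ^ S.card * (1 - q) ^ (G.n - S.card)) * ((opairsIn G S).card : ℝ)) := by
        refine Finset.sum_le_sum fun S _ => ?_
        rw [← mul_add]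
        refine mul_le_mul_of_nonneg_left ?_ (hw S)
        have := card_NS_le G S
        push_cast
        exact_mod_cast Nat.cast_le.mpr this
    _ = q * (G.loops : ℝ) + q ^ 2 * (2 * (G.e : ℝ)) := by
        rw [Finset.sum_add_distrib, expLoop, expPair]

end Stmt14Aux

namespace Stmt14Aux
open FinGraph

/-- Generic expectation under Bernoulli(q) vertex selection. -/
noncomputable def wSum (G : FinGraph) (q : ℝ) (F : Finset (Fin G.n) → ℝ) : ℝ :=
  ∑ S ∈ (univ : Finset (Fin G.n)).powerset, (q ^ S.card * (1 - q) ^ (G.n - S.card)) * F S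

lemma pSampleLaw_eq_wSum (G : FinGraph) (p : ℝ) (H : UGraph) :
    pSampleLaw G p H
      = wSum G (min p 1) (fun S => if ((G.induce S).core).cls = H then 1 else 0) := rfl

/-- The inner thinning weight sums. -/
lemma inner_one {n : ℕ} (S' : Finset (Fin n)) (u : ℝ) :
    ∑ S ∈ (univ : Finset (Fin n)).powerset,
        (if S ⊆ S' then u ^ S.card * (1 - u) ^ (S'.card - S.card) else 0) = 1 := by
  have h1 : (univ : Finset (Fin n)).powerset.filter (fun S => S ⊆ S') = S'.powerset := by
    ext S
    simp [Finset.mem_powerset, Finset.subset_univ]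
  rw [Finset.sum_ite, Finset.sum_const_zero, add_zero, h1, B0]
  norm_num

lemma inner_mem {n : ℕ} (S' : Finset (Fin n)) (v : Fin n) (hv : v ∈ S') (u : ℝ) :
    ∑ S ∈ (univ : Finset (Fin n)).powerset,
        (if S ⊆ S' then (u ^ S.card * (1 - u) ^ (S'.card - S.card)) * (if v ∈ S then 1 else 0) else 0)
      = u := by
  have h1 : (univ : Finset (Fin n)).powerset.filter (fun S => S ⊆ S') = S'.powerset := by
    ext S
    simp [Finset.mem_powerset, Finset.subset_univ]
  rw [Finset.sum_ite, Finset.sum_const_zero, add_zero, h1]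
  have h2 : ∀ S ∈ S'.powerset,
      (u ^ S.card * (1 - u) ^ (S'.card - S.card)) * (if v ∈ S then 1 else 0)
        = (if ({v} : Finset (Fin n)) ⊆ S then u ^ S.card * (1 - u) ^ (S'.card - S.card) else 0) := by
    intro S _
    by_cases h : v ∈ S <;> simp [h, Finset.singleton_subset_iff]
  rw [Finset.sum_congr rfl h2, EXPA S' {v} (Finset.singleton_subset_iff.mpr hv)]
  norm_num

lemma inner_notmem {n : ℕ} (S' : Finset (Fin n)) (v : Fin n) (hv : v ∈ S') (u : ℝ) :
    ∑ S ∈ (univ : Finset (Fin n)).powerset,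
        (if S ⊆ S' then (u ^ S.card * (1 - u) ^ (S'.card - S.card)) * (if v ∈ S then 0 else 1) else 0)
      = 1 - u := by
  have key : ∀ S : Finset (Fin n),
      (if S ⊆ S' then (u ^ S.card * (1 - u) ^ (S'.card - S.card)) * (if v ∈ S then 0 else 1) else 0)
      = (if S ⊆ S' then u ^ S.card * (1 - u) ^ (S'.card - S.card) else 0)
        - (if S ⊆ S' then (u ^ S.card * (1 - u) ^ (S'.card - S.card)) * (if v ∈ S then 1 else 0) else 0) := by
    intro S
    by_cases h1 : S ⊆ S' <;> by_cases h2 : v ∈ S <;> simp [h1, h2]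
  rw [Finset.sum_congr rfl (fun S _ => key S), Finset.sum_sub_distrib,
    inner_one S' u, inner_mem S' v hv u]

/-- The key equicontinuity estimate for the sampling laws. -/
lemma key_est (G : FinGraph) (H : UGraph) (q₁ q₂ : ℝ) (h0 : 0 ≤ q₁) (h12 : q₁ ≤ q₂)
    (h1 : q₂ ≤ 1) :
    |wSum G q₁ (fun S => if ((G.induce S).core).cls = H then 1 else 0)
      - wSum G q₂ (fun S => if ((G.induce S).core).cls = H then 1 else 0)|
      ≤ (q₂ - q₁) * ((G.loops : ℝ) + 2 * q₂ * (G.e : ℝ)) := by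
  classical
  rcases eq_or_lt_of_le (h0.trans h12) with hq2 | hq2
  · -- q₂ = 0, hence q₁ = 0 and the two sums agree
    have hq2' : q₂ = 0 := hq2.symm
    have hq1 : q₁ = 0 := le_antisymm (hq2' ▸ h12) h0
    rw [hq1, hq2']
    simp
  set u : ℝ := q₁ / q₂ with hu
  have hu0 : 0 ≤ u := div_nonneg h0 hq2.le
  have hu1 : u ≤ 1 := (div_le_one hq2).mpr h12
  have hqu : q₂ * u = q₁ := by rw [hu]; field_simp
  set I : Finset (Fin G.n) → ℝ := fun S => if ((G.induce S).core).cls = H then 1 else 0 with hI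
  have hIbd : ∀ S S' : Finset (Fin G.n), NS G S' ⊆ S → S ⊆ S' → I S = I S' := by
    intro S S' hNS hSS
    show (if ((G.induce S).core).cls = H then (1:ℝ) else 0)
        = (if ((G.induce S').core).cls = H then (1:ℝ) else 0)
    rw [core_cls_stab G S S' hNS hSS]
  have hI01 : ∀ S, 0 ≤ I S ∧ I S ≤ 1 := by
    intro S
    simp only [hI]
    by_cases h : ((G.induce S).core).cls = H <;> simp [h]
  have hP : (univ : Finset (Fin G.n)).card = G.n := by simp
  set w₂ : Finset (Fin G.n) → ℝ := fun S => q₂ ^ S.card * (1 - q₂) ^ (G.n - S.card) with hw₂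
  set t : Finset (Fin G.n) → Finset (Fin G.n) → ℝ :=
    fun S S' => u ^ S.card * (1 - u) ^ (S'.card - S.card) with ht
  have hw₂0 : ∀ S, 0 ≤ w₂ S :=
    fun S => mul_nonneg (pow_nonneg (h0.trans h12) _) (pow_nonneg (by linarith) _)
  have ht0 : ∀ S S', 0 ≤ t S S' :=
    fun S S' => mul_nonneg (pow_nonneg hu0 _) (pow_nonneg (by linarith) _)
  -- Step A : wSum q₁ I as a double sum
  have stepA : wSum G q₁ I
      = ∑ S' ∈ (univ : Finset (Fin G.n)).powerset, ∑ S ∈ (univ : Finset (Fin G.n)).powerset,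
          (if S ⊆ S' then w₂ S' * t S S' * I S else 0) := by
    rw [Finset.sum_comm]
    unfold wSum
    refine Finset.sum_congr rfl fun S hS => ?_
    have : ∀ S' ∈ (univ : Finset (Fin G.n)).powerset,
        (if S ⊆ S' then w₂ S' * t S S' * I S else 0)
          = (if S ⊆ S' then
              (q₂ ^ S'.card * (1 - q₂) ^ ((univ : Finset (Fin G.n)).card - S'.card))
                * (u ^ S.card * (1 - u) ^ (S'.card - S.card)) else 0) * I S := by
      intro S' _
      rw [ite_mul, zero_mul, hw₂, ht, hP]
    rw [Finset.sum_congr rfl this, ← Finset.sum_mul,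
       THIN (univ : Finset (Fin G.n)) S (Finset.subset_univ S) q₂ u, hqu, hP]
  -- Step B : wSum q₂ I as a double sum
  have stepB : wSum G q₂ I
      = ∑ S' ∈ (univ : Finset (Fin G.n)).powerset, ∑ S ∈ (univ : Finset (Fin G.n)).powerset,
          (if S ⊆ S' then w₂ S' * t S S' * I S' else 0) := by
    unfold wSum
    refine Finset.sum_congr rfl fun S' hS' => ?_
    have : ∀ S ∈ (univ : Finset (Fin G.n)).powerset,
        (if S ⊆ S' then w₂ S' * t S S' * I S' else 0)
          = (w₂ S' * I S') * (if S ⊆ S' then t S S' else 0) := by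
      intro S _
      by_cases h : S ⊆ S' <;> simp [h] <;> ring
    rw [Finset.sum_congr rfl this, ← Finset.mul_sum]
    have : ∑ S ∈ (univ : Finset (Fin G.n)).powerset, (if S ⊆ S' then t S S' else 0) = 1 :=
      inner_one S' u
    rw [this, mul_one, hw₂]
  -- Step C : bound the difference
  rw [stepA, stepB, ← Finset.sum_sub_distrib]
  calc |∑ S' ∈ (univ : Finset (Fin G.n)).powerset,
        (∑ S ∈ (univ : Finset (Fin G.n)).powerset, (if S ⊆ S' then w₂ S' * t S S' * I S else 0)
          - ∑ S ∈ (univ : Finset (Fin G.n)).powerset, (if S ⊆ S' then w₂ S' * t S S' * I S' else 0))|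
      ≤ ∑ S' ∈ (univ : Finset (Fin G.n)).powerset,
        |∑ S ∈ (univ : Finset (Fin G.n)).powerset, (if S ⊆ S' then w₂ S' * t S S' * I S else 0)
          - ∑ S ∈ (univ : Finset (Fin G.n)).powerset, (if S ⊆ S' then w₂ S' * t S S' * I S' else 0)| :=
        Finset.abs_sum_le_sum_abs _ _
    _ ≤ ∑ S' ∈ (univ : Finset (Fin G.n)).powerset,
          w₂ S' * ((1 - u) * ((NS G S').card : ℝ)) := by
        refine Finset.sum_le_sum fun S' _ => ?_
        rw [← Finset.sum_sub_distrib]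
        refine (Finset.abs_sum_le_sum_abs _ _).trans ?_
        have hptwise : ∀ S ∈ (univ : Finset (Fin G.n)).powerset,
            |(if S ⊆ S' then w₂ S' * t S S' * I S else 0)
              - (if S ⊆ S' then w₂ S' * t S S' * I S' else 0)|
            ≤ ∑ v ∈ NS G S',
                (if S ⊆ S' then (w₂ S' * t S S') * (if v ∈ S then 0 else 1) else 0) := by
          intro S _
          by_cases hSS : S ⊆ S'
          · simp only [hSS, if_true]
            by_cases hNS : NS G S' ⊆ S
            · rw [hIbd S S' hNS hSS, sub_self, abs_zero]
              refine Finset.sum_nonneg fun v _ => ?_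
              have := mul_nonneg (hw₂0 S') (ht0 S S')
              by_cases h : v ∈ S <;> simp [h] <;> positivity
            · -- some v in NS G S' not in S
              obtain ⟨v, hvNS, hvS⟩ := Finset.not_subset.mp hNS
              have hle1 : |w₂ S' * t S S' * I S - w₂ S' * t S S' * I S'| ≤ w₂ S' * t S S' := by
                rw [← mul_sub, abs_mul, abs_of_nonneg (mul_nonneg (hw₂0 S') (ht0 S S'))]
                have : |I S - I S'| ≤ 1 := by
                  have h1 := hI01 S
                  have h2 := hI01 S'
                  rw [abs_le]; constructor <;> linarith
                calc w₂ S' * t S S' * |I S - I S'| ≤ w₂ S' * t S S' * 1 :=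
                      mul_le_mul_of_nonneg_left this (mul_nonneg (hw₂0 S') (ht0 S S'))
                  _ = w₂ S' * t S S' := mul_one _
              refine hle1.trans ?_
              have hsingle := Finset.single_le_sum
                (f := fun v' => (w₂ S' * t S S') * (if v' ∈ S then 0 else 1))
                (fun v' _ => by
                  have := mul_nonneg (hw₂0 S') (ht0 S S')
                  by_cases h : v' ∈ S <;> simp [h]; positivity) hvNS
              calc w₂ S' * t S S' = (w₂ S' * t S S') * (if v ∈ S then 0 else 1) := by
                    simp [hvS]
                _ ≤ _ := hsingle
          · simp [hSS]
        refine (Finset.sum_le_sum hptwise).trans ?_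
        rw [Finset.sum_comm]
        have hin : ∀ v ∈ NS G S',
            ∑ S ∈ (univ : Finset (Fin G.n)).powerset,
              (if S ⊆ S' then (w₂ S' * t S S') * (if v ∈ S then 0 else 1) else 0)
            = w₂ S' * (1 - u) := by
          intro v hv
          have hvS' : v ∈ S' := (Finset.mem_filter.mp hv).1
          have : ∀ S ∈ (univ : Finset (Fin G.n)).powerset,
              (if S ⊆ S' then (w₂ S' * t S S') * (if v ∈ S then 0 else 1) else 0)
              = w₂ S' * (if S ⊆ S' then (t S S') * (if v ∈ S then 0 else 1) else 0) := by
            intro S _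
            by_cases h : S ⊆ S' <;> simp [h] <;> ring
          rw [Finset.sum_congr rfl this, ← Finset.mul_sum, inner_notmem S' v hvS' u]
        rw [Finset.sum_congr rfl hin, Finset.sum_const, nsmul_eq_mul]
        ring_nf
        rfl
    _ ≤ (q₂ - q₁) * ((G.loops : ℝ) + 2 * q₂ * (G.e : ℝ)) := by
        have : ∀ S' ∈ (univ : Finset (Fin G.n)).powerset,
            w₂ S' * ((1 - u) * ((NS G S').card : ℝ))
              = (1 - u) * (w₂ S' * ((NS G S').card : ℝ)) := by
          intro S' _; ring
        rw [Finset.sum_congr rfl this, ← Finset.mul_sum]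
        have hNSle := expNS G q₂ (h0.trans h12) h1
        have h1u : 0 ≤ 1 - u := by linarith
        calc (1 - u) * ∑ S' ∈ (univ : Finset (Fin G.n)).powerset, w₂ S' * ((NS G S').card : ℝ)
            ≤ (1 - u) * (q₂ * (G.loops : ℝ) + q₂ ^ 2 * (2 * (G.e : ℝ))) := by
              refine mul_le_mul_of_nonneg_left ?_ h1u
              exact hNSle
          _ = ((1 - u) * q₂) * (G.loops : ℝ) + ((1 - u) * q₂) * q₂ * (2 * (G.e : ℝ)) := by
              ring
          _ = (q₂ - q₁) * ((G.loops : ℝ) + 2 * q₂ * (G.e : ℝ)) := by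
              have h : (1 - u) * q₂ = q₂ - q₁ := by
                rw [sub_mul, one_mul, mul_comm, hqu]
              rw [h]; ring

end Stmt14Aux

namespace Stmt14Aux
open FinGraph

lemma weight_nonneg (G : FinGraph) (p : ℝ) (hp : 0 ≤ p) (S : Finset (Fin G.n)) :
    0 ≤ sampleWeight G p S := by
  unfold sampleWeight
  have h0 : 0 ≤ min p 1 := le_min hp zero_le_one
  have h1 : min p 1 ≤ 1 := min_le_right _ _
  exact mul_nonneg (pow_nonneg h0 _) (pow_nonneg (by linarith) _)

lemma sum_weight (G : FinGraph) (p : ℝ) :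
    ∑ S ∈ (univ : Finset (Fin G.n)).powerset, sampleWeight G p S = 1 := sumW G (min p 1)

lemma law_nonneg (G : FinGraph) (p : ℝ) (hp : 0 ≤ p) (H : UGraph) :
    0 ≤ pSampleLaw G p H := by
  unfold pSampleLaw
  refine Finset.sum_nonneg fun S _ => ?_
  refine mul_nonneg (weight_nonneg G p hp S) ?_
  by_cases h : ((G.induce S).core).cls = H <;> simp [h]

lemma law_finsum_le_one (G : FinGraph) (p : ℝ) (hp : 0 ≤ p) (T : Finset UGraph) :
    ∑ H ∈ T, pSampleLaw G p H ≤ 1 := by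
  unfold pSampleLaw
  rw [Finset.sum_comm]
  calc ∑ S ∈ (univ : Finset (Fin G.n)).powerset, ∑ H ∈ T,
        sampleWeight G p S * (if ((G.induce S).core).cls = H then 1 else 0)
      = ∑ S ∈ (univ : Finset (Fin G.n)).powerset,
        sampleWeight G p S * (if ((G.induce S).core).cls ∈ T then 1 else 0) := by
        refine Finset.sum_congr rfl fun S _ => ?_
        rw [← Finset.mul_sum, Finset.sum_ite_eq T ((G.induce S).core).cls (fun _ => (1:ℝ))]
    _ ≤ ∑ S ∈ (univ : Finset (Fin G.n)).powerset, sampleWeight G p S := by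
        refine Finset.sum_le_sum fun S _ => ?_
        by_cases h : ((G.induce S).core).cls ∈ T <;>
          simp [h, weight_nonneg G p hp S]
    _ = 1 := sum_weight G p

lemma law_le_one (G : FinGraph) (p : ℝ) (hp : 0 ≤ p) (H : UGraph) :
    pSampleLaw G p H ≤ 1 := by
  have := law_finsum_le_one G p hp {H}
  simpa using this

/-- Classes of graphs having a representative with at most `N` vertices. -/
def bigSet (N : ℕ) : Set UGraph := {H | ∃ F : FinGraph, F.n ≤ N ∧ F.cls = H}

lemma bigSet_finite (N : ℕ) : (bigSet N).Finite := by
  have h1 : Finite {F : FinGraph // F.n ≤ N} := by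
    refine Finite.of_injective
      (fun F => (⟨⟨F.1.n, Nat.lt_succ_of_le F.2⟩, F.1.adj⟩ :
        Σ n : Fin (N + 1), (Fin n → Fin n → Bool))) ?_
    rintro ⟨⟨n₁, a₁, s₁⟩, h₁⟩ ⟨⟨n₂, a₂, s₂⟩, h₂⟩ h
    obtain ⟨hn, ha⟩ := Sigma.mk.inj_iff.mp h
    have hn' : n₁ = n₂ := by simpa using hn
    subst hn'
    simp only [Subtype.mk.injEq, FinGraph.mk.injEq]
    exact ⟨trivial, heq_of_eq (eq_of_heq ha)⟩
  have h2 : bigSet N = Set.range (fun F : {F : FinGraph // F.n ≤ N} => F.1.cls) := by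
    ext H
    simp only [bigSet, Set.mem_setOf_eq, Set.mem_range, Subtype.exists]
    constructor
    · rintro ⟨F, hF, rfl⟩; exact ⟨F, hF, rfl⟩
    · rintro ⟨F, hF, rfl⟩; exact ⟨F, hF, rfl⟩
  rw [h2]
  exact Set.finite_range _

lemma tight (G : FinGraph) (p : ℝ) (hp : 0 ≤ p) (N : ℕ) (hN : 0 < N) :
    1 - (min p 1 * (G.loops : ℝ) + (min p 1) ^ 2 * (2 * (G.e : ℝ))) / N
      ≤ ∑ H ∈ (bigSet_finite N).toFinset, pSampleLaw G p H := by
  classical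
  have h0 : 0 ≤ min p 1 := le_min hp zero_le_one
  have h1 : min p 1 ≤ 1 := min_le_right _ _
  have hNpos : (0 : ℝ) < N := by exact_mod_cast hN
  unfold pSampleLaw
  rw [Finset.sum_comm]
  have hstep : ∀ S ∈ (univ : Finset (Fin G.n)).powerset,
      sampleWeight G p S * (1 - ((NS G S).card : ℝ) / N)
        ≤ ∑ H ∈ (bigSet_finite N).toFinset,
            sampleWeight G p S * (if ((G.induce S).core).cls = H then 1 else 0) := by
    intro S _
    rw [← Finset.mul_sum,
      Finset.sum_ite_eq (bigSet_finite N).toFinset ((G.induce S).core).cls (fun _ => (1:ℝ))]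
    refine mul_le_mul_of_nonneg_left ?_ (weight_nonneg G p hp S)
    by_cases hmem : ((G.induce S).core).cls ∈ (bigSet_finite N).toFinset
    · rw [if_pos hmem]
      have : 0 ≤ ((NS G S).card : ℝ) / N := div_nonneg (Nat.cast_nonneg _) hNpos.le
      linarith
    · rw [if_neg hmem]
      have hbig : N < (NS G S).card := by
        by_contra hle
        push_neg at hle
        apply hmem
        rw [Set.Finite.mem_toFinset]
        exact ⟨G.induce (NS G S), hle, (master G S).symm⟩
      have : (1 : ℝ) ≤ ((NS G S).card : ℝ) / N := by
        rw [le_div_iff₀ hNpos, one_mul]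
        exact_mod_cast Nat.le_of_lt hbig
      linarith
  calc 1 - (min p 1 * (G.loops : ℝ) + (min p 1) ^ 2 * (2 * (G.e : ℝ))) / N
      ≤ ∑ S ∈ (univ : Finset (Fin G.n)).powerset,
          sampleWeight G p S * (1 - ((NS G S).card : ℝ) / N) := by
        have hexp : ∑ S ∈ (univ : Finset (Fin G.n)).powerset,
            sampleWeight G p S * (1 - ((NS G S).card : ℝ) / N)
            = 1 - (∑ S ∈ (univ : Finset (Fin G.n)).powerset,
                sampleWeight G p S * ((NS G S).card : ℝ)) / N := by
          have : ∀ S ∈ (univ : Finset (Fin G.n)).powerset,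
              sampleWeight G p S * (1 - ((NS G S).card : ℝ) / N)
                = sampleWeight G p S - (sampleWeight G p S * ((NS G S).card : ℝ)) / N := by
            intro S _; field_simp
          rw [Finset.sum_congr rfl this, Finset.sum_sub_distrib, sum_weight, ← Finset.sum_div]
        rw [hexp]
        have hENS : ∑ S ∈ (univ : Finset (Fin G.n)).powerset,
            sampleWeight G p S * ((NS G S).card : ℝ)
            ≤ min p 1 * (G.loops : ℝ) + (min p 1) ^ 2 * (2 * (G.e : ℝ)) := expNS G (min p 1) h0 h1
        have hd : (∑ S ∈ (univ : Finset (Fin G.n)).powerset,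
            sampleWeight G p S * ((NS G S).card : ℝ)) / N
            ≤ (min p 1 * (G.loops : ℝ) + (min p 1) ^ 2 * (2 * (G.e : ℝ))) / N := by
          gcongr
        linarith
    _ ≤ _ := Finset.sum_le_sum hstep

end Stmt14Aux

namespace Stmt14Aux
open FinGraph

instance : Countable FinGraph := by
  have hinj : Function.Injective
      (fun F : FinGraph => (⟨F.n, F.adj⟩ : Σ n : ℕ, (Fin n → Fin n → Bool))) := by
    rintro ⟨n₁, a₁, s₁⟩ ⟨n₂, a₂, s₂⟩ h
    obtain ⟨hn, ha⟩ := Sigma.mk.inj_iff.mp h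
    subst hn
    simp only [FinGraph.mk.injEq]
    exact ⟨trivial, heq_of_eq (eq_of_heq ha)⟩
  exact hinj.countable

instance : Countable UGraph := by
  unfold UGraph
  infer_instance

lemma key_est2 (G : FinGraph) (C a b : ℝ) (hC : (G.loops : ℝ) ≤ C * Real.sqrt (G.e : ℝ))
    (he1 : 1 ≤ (G.e : ℝ)) (ha : 0 < a) (hab : a ≤ b) (H : UGraph) :
    |pSampleLaw G (a / Real.sqrt (2 * (G.e : ℝ))) H
      - pSampleLaw G (b / Real.sqrt (2 * (G.e : ℝ))) H|
      ≤ (b - a) * (C / Real.sqrt 2 + b) := by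
  have hs2 : (0:ℝ) < Real.sqrt 2 := Real.sqrt_pos.mpr (by norm_num)
  have hse : (0:ℝ) < Real.sqrt (G.e : ℝ) := Real.sqrt_pos.mpr (by linarith)
  have hsplit : Real.sqrt (2 * (G.e : ℝ)) = Real.sqrt 2 * Real.sqrt (G.e : ℝ) :=
    Real.sqrt_mul (by norm_num) _
  have hC0 : 0 ≤ C := by nlinarith [(Nat.cast_nonneg G.loops : (0:ℝ) ≤ (G.loops:ℝ))]
  set s : ℝ := Real.sqrt 2 * Real.sqrt (G.e : ℝ) with hsdef
  have hs0 : 0 < s := mul_pos hs2 hse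
  have hsq : s * s = 2 * (G.e : ℝ) := by
    rw [hsdef]
    have h2 : Real.sqrt 2 * Real.sqrt 2 = 2 := Real.mul_self_sqrt (by norm_num)
    have hee : Real.sqrt (G.e:ℝ) * Real.sqrt (G.e:ℝ) = (G.e:ℝ) :=
      Real.mul_self_sqrt (by linarith)
    calc Real.sqrt 2 * Real.sqrt (G.e:ℝ) * (Real.sqrt 2 * Real.sqrt (G.e:ℝ))
        = (Real.sqrt 2 * Real.sqrt 2) * (Real.sqrt (G.e:ℝ) * Real.sqrt (G.e:ℝ)) := by ring
      _ = 2 * (G.e:ℝ) := by rw [h2, hee]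
  rw [hsplit]
  set p₁ : ℝ := a / s with hp₁def
  set p₂ : ℝ := b / s with hp₂def
  have hp₁0 : 0 ≤ p₁ := div_nonneg ha.le hs0.le
  have hp₂0 : 0 ≤ p₂ := div_nonneg (ha.le.trans hab) hs0.le
  have hp12 : p₁ ≤ p₂ := div_le_div_of_nonneg_right hab hs0.le
  have h0q : 0 ≤ min p₁ 1 := le_min hp₁0 zero_le_one
  have h12q : min p₁ 1 ≤ min p₂ 1 := min_le_min hp12 le_rfl
  have h1q : min p₂ 1 ≤ 1 := min_le_right _ _
  have hqd : min p₂ 1 - min p₁ 1 ≤ p₂ - p₁ := by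
    rcases le_total p₁ 1 with h | h
    · rcases le_total p₂ 1 with h' | h'
      · rw [min_eq_left h, min_eq_left h']
      · rw [min_eq_right h', min_eq_left h]; linarith
    · rw [min_eq_right h, min_eq_right ((h.trans hp12 : (1:ℝ) ≤ p₂) : 1 ≤ p₂)]; linarith
  have hq₂b : min p₂ 1 ≤ p₂ := min_le_left _ _
  have hd : p₂ - p₁ = (b - a) / s := by rw [hp₁def, hp₂def, ← sub_div]
  have hpd0 : 0 ≤ p₂ - p₁ := by linarith
  rw [pSampleLaw_eq_wSum, pSampleLaw_eq_wSum]
  calc |wSum G (min p₁ 1) (fun S => if ((G.induce S).core).cls = H then 1 else 0)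
        - wSum G (min p₂ 1) (fun S => if ((G.induce S).core).cls = H then 1 else 0)|
      ≤ (min p₂ 1 - min p₁ 1) * ((G.loops : ℝ) + 2 * min p₂ 1 * (G.e : ℝ)) :=
        key_est G H (min p₁ 1) (min p₂ 1) h0q h12q h1q
    _ ≤ (p₂ - p₁) * ((G.loops : ℝ) + 2 * p₂ * (G.e : ℝ)) := by
        refine mul_le_mul hqd ?_ ?_ hpd0
        · have h2 : (0:ℝ) ≤ (G.e : ℝ) := Nat.cast_nonneg _
          nlinarith
        · have h2 : (0:ℝ) ≤ (G.e : ℝ) := Nat.cast_nonneg _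
          have h3 : (0:ℝ) ≤ (G.loops : ℝ) := Nat.cast_nonneg _
          have h4 : 0 ≤ min p₂ 1 := h0q.trans h12q
          nlinarith
    _ ≤ (p₂ - p₁) * ((C * Real.sqrt (G.e : ℝ)) + 2 * p₂ * (G.e : ℝ)) := by
        refine mul_le_mul_of_nonneg_left ?_ hpd0
        linarith
    _ = (b - a) * (C / Real.sqrt 2) + (b - a) * b := by
        rw [hd, hp₂def]
        rw [mul_add]
        congr 1
        · rw [hsdef]
          field_simp
        · have hne : s ≠ 0 := ne_of_gt hs0
          have hsq2 : Real.sqrt 2 ^ 2 * Real.sqrt (G.e:ℝ) ^ 2 = 2 * (G.e:ℝ) := by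
            rw [Real.sq_sqrt (by norm_num : (0:ℝ) ≤ 2), Real.sq_sqrt (by linarith : (0:ℝ) ≤ (G.e:ℝ))]
          field_simp
          linear_combination (b*a - b^2) * hsq2
    _ = (b - a) * (C / Real.sqrt 2 + b) := by ring

end Stmt14Aux

namespace Stmt14Aux
open FinGraph

lemma arch (c ε : ℝ) (hc : 0 ≤ c) (hε : 0 < ε) :
    ∃ M : ℕ, ∀ m : ℕ, M ≤ m → c / ((m : ℝ) + 1) < ε := by
  obtain ⟨M, hM⟩ := exists_nat_gt (c / ε)
  refine ⟨M, fun m hm => ?_⟩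
  have h1 : (0:ℝ) < (m : ℝ) + 1 := by positivity
  rw [div_lt_iff₀ h1]
  have h2 : c / ε < (m : ℝ) + 1 := by
    have : (M : ℝ) ≤ (m : ℝ) := by exact_mod_cast hm
    linarith
  calc c = (c / ε) * ε := by field_simp
    _ < ((m : ℝ) + 1) * ε := mul_lt_mul_of_pos_right h2 hε
    _ = ε * ((m : ℝ) + 1) := mul_comm _ _

lemma tight2 (G : FinGraph) (C r : ℝ) (hC : (G.loops : ℝ) ≤ C * Real.sqrt (G.e : ℝ))
    (he1 : 1 ≤ (G.e : ℝ)) (hr : 0 < r) (N : ℕ) (hN : 0 < N) :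
    1 - (r * (C / Real.sqrt 2) + r ^ 2) / N
      ≤ ∑ H ∈ (bigSet_finite N).toFinset, pSampleLaw G (r / Real.sqrt (2 * (G.e : ℝ))) H := by
  have hs2 : (0:ℝ) < Real.sqrt 2 := Real.sqrt_pos.mpr (by norm_num)
  have hse : (0:ℝ) < Real.sqrt (G.e : ℝ) := Real.sqrt_pos.mpr (by linarith)
  have hsplit : Real.sqrt (2 * (G.e : ℝ)) = Real.sqrt 2 * Real.sqrt (G.e : ℝ) :=
    Real.sqrt_mul (by norm_num) _
  have hsq2 : Real.sqrt 2 ^ 2 * Real.sqrt (G.e:ℝ) ^ 2 = 2 * (G.e:ℝ) := by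
    rw [Real.sq_sqrt (by norm_num : (0:ℝ) ≤ 2), Real.sq_sqrt (by linarith : (0:ℝ) ≤ (G.e:ℝ))]
  set p : ℝ := r / Real.sqrt (2 * (G.e : ℝ)) with hpdef
  have hp0 : 0 ≤ p := div_nonneg hr.le (Real.sqrt_nonneg _)
  have hq0 : 0 ≤ min p 1 := le_min hp0 zero_le_one
  have hqp : min p 1 ≤ p := min_le_left _ _
  have hNpos : (0 : ℝ) < N := by exact_mod_cast hN
  refine le_trans ?_ (tight G p hp0 N hN)
  have hnum : min p 1 * (G.loops : ℝ) + (min p 1) ^ 2 * (2 * (G.e : ℝ))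
      ≤ r * (C / Real.sqrt 2) + r ^ 2 := by
    have hC0 : 0 ≤ C := by nlinarith [(Nat.cast_nonneg G.loops : (0:ℝ) ≤ (G.loops:ℝ))]
    have hL0 : (0:ℝ) ≤ (G.loops : ℝ) := Nat.cast_nonneg _
    have hE0 : (0:ℝ) ≤ (G.e : ℝ) := Nat.cast_nonneg _
    have ht1 : min p 1 * (G.loops : ℝ) ≤ r * (C / Real.sqrt 2) := by
      have h1 : min p 1 * (G.loops : ℝ) ≤ p * (C * Real.sqrt (G.e:ℝ)) := by
        have := mul_le_mul hqp hC hL0 hp0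
        exact this
      refine h1.trans ?_
      have heq : p * (C * Real.sqrt (G.e:ℝ)) = r * (C / Real.sqrt 2) := by
        rw [hpdef, hsplit]
        field_simp
      rw [heq]
    have ht2 : (min p 1) ^ 2 * (2 * (G.e : ℝ)) ≤ r ^ 2 := by
      have h1 : (min p 1) ^ 2 ≤ p ^ 2 := by nlinarith
      have h2 : p ^ 2 * (2 * (G.e : ℝ)) = r ^ 2 := by
        rw [hpdef, hsplit, div_pow, mul_pow]
        rw [hsq2]
        field_simp
      calc (min p 1) ^ 2 * (2 * (G.e : ℝ)) ≤ p ^ 2 * (2 * (G.e : ℝ)) := by nlinarith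
        _ = r ^ 2 := h2
    linarith
  have hdiv : (min p 1 * (G.loops : ℝ) + (min p 1) ^ 2 * (2 * (G.e : ℝ))) / N
      ≤ (r * (C / Real.sqrt 2) + r ^ 2) / N := by gcongr
  linarith

end Stmt14Aux


open Stmt14Aux

/-- Every sequence of finite graphs with `e(G_j) → ∞` and
`ℓ(G_j) = O(√(e(G_j)))` has a subsequence that is sampling convergent: along the
subsequence, for every `r > 0` the laws of `S_{r/√(2e)}(G_j)`, viewed as probability
measures on the countable discrete set of unlabeled graphs, converge weakly (equivalently,
pointwise to a pmf `μ`). -/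
theorem stmt14 (G : ℕ → FinGraph)
    (he : Tendsto (fun j => ((G j).e : ℝ)) atTop atTop)
    (hl : ∃ C : ℝ, ∀ j, ((G j).loops : ℝ) ≤ C * Real.sqrt ((G j).e : ℝ)) :
    ∃ φ : ℕ → ℕ, StrictMono φ ∧
      ∀ r : ℝ, 0 < r → ∃ μ : UGraph → ℝ,
        (∀ H, 0 ≤ μ H) ∧ (∑' H : UGraph, μ H) = 1 ∧
        ∀ H, Tendsto
          (fun k => pSampleLaw (G (φ k)) (r / Real.sqrt (2 * ((G (φ k)).e : ℝ))) H)
          atTop (nhds (μ H)) := by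
  classical
  obtain ⟨C, hC⟩ := hl
  -- the diagonal-type extraction via compactness of a countable product
  set y : ℕ → ((ℚ × UGraph) → Set.Icc (0:ℝ) 1) := fun j s =>
    ⟨pSampleLaw (G j) |(s.1 : ℝ) / Real.sqrt (2 * ((G j).e : ℝ))| s.2,
      Set.mem_Icc.mpr ⟨law_nonneg _ _ (abs_nonneg _) _, law_le_one _ _ (abs_nonneg _) _⟩⟩
    with hy
  obtain ⟨L, -, φ, hφ, hconv⟩ := isCompact_univ.tendsto_subseq (x := y)
    (fun n => Set.mem_univ (y n))
  refine ⟨φ, hφ, ?_⟩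
  have hLconv : ∀ s : ℚ × UGraph,
      Tendsto (fun k => pSampleLaw (G (φ k))
        |(s.1 : ℝ) / Real.sqrt (2 * ((G (φ k)).e : ℝ))| s.2) atTop (nhds (L s : ℝ)) := by
    intro s
    have h1 : Tendsto (fun k => (y ∘ φ) k s) atTop (nhds (L s)) := tendsto_pi_nhds.mp hconv s
    have h2 := (continuous_subtype_val.tendsto (L s)).comp h1
    refine Tendsto.congr (fun k => ?_) h2
    show ((y (φ k)) s : ℝ) = _
    rw [hy]
  have he' : Tendsto (fun k => ((G (φ k)).e : ℝ)) atTop atTop :=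
    he.comp hφ.tendsto_atTop
  have hee1 : ∀ᶠ k in atTop, 1 ≤ ((G (φ k)).e : ℝ) := he'.eventually_ge_atTop 1
  have hC0 : 0 ≤ C := by
    obtain ⟨k, hk⟩ := hee1.exists
    have h1 := hC (φ k)
    have h2 : (0:ℝ) ≤ ((G (φ k)).loops : ℝ) := Nat.cast_nonneg _
    have h3 : (0:ℝ) < Real.sqrt ((G (φ k)).e : ℝ) := Real.sqrt_pos.mpr (by linarith)
    nlinarith
  set D : ℝ := C / Real.sqrt 2 with hD
  have hD0 : 0 ≤ D := div_nonneg hC0 (Real.sqrt_nonneg 2)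
  have hkey : ∀ a b : ℝ, 0 < a → a ≤ b → ∀ H : UGraph, ∀ᶠ k in atTop,
      |pSampleLaw (G (φ k)) (a / Real.sqrt (2 * ((G (φ k)).e : ℝ))) H
        - pSampleLaw (G (φ k)) (b / Real.sqrt (2 * ((G (φ k)).e : ℝ))) H|
        ≤ (b - a) * (D + b) := by
    intro a b ha hab H
    filter_upwards [hee1] with k hk
    exact key_est2 (G (φ k)) C a b (hC (φ k)) hk ha hab H
  set Lf : ℚ → UGraph → ℝ := fun q H => (L (q, H) : ℝ) with hLfdef
  have hLf : ∀ (q : ℚ) (H : UGraph), 0 < (q : ℝ) →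
      Tendsto (fun k => pSampleLaw (G (φ k))
        ((q : ℝ) / Real.sqrt (2 * ((G (φ k)).e : ℝ))) H) atTop (nhds (Lf q H)) := by
    intro q H hq
    have h := hLconv (q, H)
    refine Tendsto.congr (fun k => ?_) h
    congr 1
    exact abs_of_nonneg (div_nonneg hq.le (Real.sqrt_nonneg _))
  have hLfdiff : ∀ (q₁ q₂ : ℚ) (H : UGraph), 0 < (q₁ : ℝ) → (q₁ : ℝ) ≤ (q₂ : ℝ) →
      |Lf q₁ H - Lf q₂ H| ≤ ((q₂ : ℝ) - (q₁ : ℝ)) * (D + (q₂ : ℝ)) := by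
    intro q₁ q₂ H h1 h2
    have hdiff := ((hLf q₁ H h1).sub (hLf q₂ H (lt_of_lt_of_le h1 h2))).abs
    exact le_of_tendsto hdiff (hkey (q₁ : ℝ) (q₂ : ℝ) h1 h2 H)
  intro r hr
  -- rational approximations of `r` from above
  have hratex : ∀ m : ℕ, ∃ q : ℚ, r < (q : ℝ) ∧ (q : ℝ) < r + 1 / ((m : ℝ) + 1) := by
    intro m
    refine exists_rat_btwn ?_
    have h : (0:ℝ) < 1 / ((m : ℝ) + 1) := by positivity
    linarith
  choose qm hqm1 hqm2 using hratex
  have hqmpos : ∀ m, 0 < ((qm m : ℚ) : ℝ) := fun m => hr.trans (hqm1 m)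
  have hqmub : ∀ m, ((qm m : ℚ) : ℝ) ≤ r + 1 := by
    intro m
    have h1 : 1 / ((m : ℝ) + 1) ≤ 1 := by
      rw [div_le_one (by positivity)]
      have : (0:ℝ) ≤ (m : ℝ) := Nat.cast_nonneg _
      linarith
    have := hqm2 m
    linarith
  -- the pointwise limit μ
  have hcau : ∀ H : UGraph, ∃ x : ℝ, Tendsto (fun m => Lf (qm m) H) atTop (nhds x) := by
    intro H
    refine cauchySeq_tendsto_of_complete ?_
    rw [Metric.cauchySeq_iff']
    intro ε hε
    obtain ⟨M, hM⟩ := arch (D + r + 1) ε (by linarith) hε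
    refine ⟨M, fun m hm => ?_⟩
    have hmono : ((qm m : ℚ) : ℝ) < r + 1 / ((M : ℝ) + 1) := by
      have h1 : 1 / ((m : ℝ) + 1) ≤ 1 / ((M : ℝ) + 1) := by
        apply one_div_le_one_div_of_le (by positivity)
        have : (M : ℝ) ≤ (m : ℝ) := by exact_mod_cast hm
        linarith
      have := hqm2 m
      linarith
    have hMub : ((qm M : ℚ) : ℝ) < r + 1 / ((M : ℝ) + 1) := hqm2 M
    rw [Real.dist_eq]
    have hbound : ∀ (i j : ℕ), ((qm i : ℚ) : ℝ) ≤ ((qm j : ℚ) : ℝ) →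
        ((qm j : ℚ) : ℝ) < r + 1 / ((M : ℝ) + 1) → ((qm i : ℚ) : ℝ) > r →
        |Lf (qm i) H - Lf (qm j) H| ≤ (1 / ((M : ℝ) + 1)) * (D + (r + 1)) := by
      intro i j hij hjub hilb
      refine (hLfdiff (qm i) (qm j) H (hr.trans hilb) hij).trans ?_
      have h1 : ((qm j : ℚ) : ℝ) - ((qm i : ℚ) : ℝ) ≤ 1 / ((M : ℝ) + 1) := by linarith
      have h2 : D + ((qm j : ℚ) : ℝ) ≤ D + (r + 1) := by
        have := hqmub j
        linarith
      have h3 : 0 ≤ D + ((qm j : ℚ) : ℝ) := by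
        have := hqmpos j
        linarith
      have h4 : (0:ℝ) ≤ 1 / ((M : ℝ) + 1) := by positivity
      exact mul_le_mul h1 h2 h3 h4
    have hfin : |Lf (qm m) H - Lf (qm M) H| ≤ (1 / ((M : ℝ) + 1)) * (D + (r + 1)) := by
      rcases le_total ((qm m : ℚ) : ℝ) ((qm M : ℚ) : ℝ) with h | h
      · exact hbound m M h hMub (hqm1 m)
      · rw [abs_sub_comm]
        exact hbound M m h hmono (hqm1 M)
    calc |Lf (qm m) H - Lf (qm M) H| ≤ (1 / ((M : ℝ) + 1)) * (D + (r + 1)) := hfin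
      _ = (D + r + 1) / ((M : ℝ) + 1) := by ring
      _ < ε := hM M le_rfl
  choose μ hμ using hcau
  -- the final convergence statement
  have hfin : ∀ H : UGraph, Tendsto
      (fun k => pSampleLaw (G (φ k)) (r / Real.sqrt (2 * ((G (φ k)).e : ℝ))) H)
      atTop (nhds (μ H)) := by
    intro H
    rw [Metric.tendsto_nhds]
    intro ε hε
    have hε3 : 0 < ε / 3 := by linarith
    obtain ⟨M₁, hM₁⟩ := arch (D + r + 1) (ε / 3) (by linarith) hε3
    obtain ⟨M₂, hM₂⟩ := Metric.tendsto_atTop.mp (hμ H) (ε / 3) hε3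
    set m := max M₁ M₂ with hm
    have h1 : (((qm m : ℚ) : ℝ) - r) * (D + ((qm m : ℚ) : ℝ)) < ε / 3 := by
      have hb1 : ((qm m : ℚ) : ℝ) - r ≤ 1 / ((m : ℝ) + 1) := by
        have := hqm2 m; linarith
      have hb2 : ((qm m : ℚ) : ℝ) ≤ r + 1 := hqmub m
      have hb0 : 0 ≤ ((qm m : ℚ) : ℝ) - r := le_of_lt (sub_pos.mpr (hqm1 m))
      have hb3 : 0 ≤ D + ((qm m : ℚ) : ℝ) := by
        have := hqmpos m; linarith
      calc (((qm m : ℚ) : ℝ) - r) * (D + ((qm m : ℚ) : ℝ))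
          ≤ (1 / ((m : ℝ) + 1)) * (D + r + 1) :=
            mul_le_mul hb1 (by linarith) hb3 (by positivity)
        _ = (D + r + 1) / ((m : ℝ) + 1) := by ring
        _ < ε / 3 := hM₁ m (le_max_left _ _)
    have h2 : |Lf (qm m) H - μ H| < ε / 3 := by
      have := hM₂ m (le_max_right _ _)
      rwa [Real.dist_eq] at this
    have h3 := (Metric.tendsto_nhds.mp (hLf (qm m) H (hqmpos m))) (ε / 3) hε3
    have h4 := hkey r ((qm m : ℚ) : ℝ) hr (le_of_lt (hqm1 m)) H
    filter_upwards [h3, h4] with k hk3 hk4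
    rw [Real.dist_eq] at hk3 ⊢
    have htri : |pSampleLaw (G (φ k)) (r / Real.sqrt (2 * ((G (φ k)).e : ℝ))) H - μ H|
        ≤ |pSampleLaw (G (φ k)) (r / Real.sqrt (2 * ((G (φ k)).e : ℝ))) H
            - pSampleLaw (G (φ k)) (((qm m : ℚ) : ℝ) / Real.sqrt (2 * ((G (φ k)).e : ℝ))) H|
          + |pSampleLaw (G (φ k)) (((qm m : ℚ) : ℝ) / Real.sqrt (2 * ((G (φ k)).e : ℝ))) H
            - Lf (qm m) H|
          + |Lf (qm m) H - μ H| := by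
      have t1 := abs_sub_le
        (pSampleLaw (G (φ k)) (r / Real.sqrt (2 * ((G (φ k)).e : ℝ))) H)
        (Lf (qm m) H) (μ H)
      have t2 := abs_sub_le
        (pSampleLaw (G (φ k)) (r / Real.sqrt (2 * ((G (φ k)).e : ℝ))) H)
        (pSampleLaw (G (φ k)) (((qm m : ℚ) : ℝ) / Real.sqrt (2 * ((G (φ k)).e : ℝ))) H)
        (Lf (qm m) H)
      linarith
    have hk4' : |pSampleLaw (G (φ k)) (r / Real.sqrt (2 * ((G (φ k)).e : ℝ))) H
        - pSampleLaw (G (φ k)) (((qm m : ℚ) : ℝ) / Real.sqrt (2 * ((G (φ k)).e : ℝ))) H|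
        < ε / 3 := lt_of_le_of_lt (hk4.trans_eq rfl) (by linarith [h1] )
    linarith
  -- μ is a pmf
  have hμ0 : ∀ H, 0 ≤ μ H := by
    intro H
    refine ge_of_tendsto (hfin H) ?_
    filter_upwards with k
    exact law_nonneg _ _ (div_nonneg hr.le (Real.sqrt_nonneg _)) _
  have hfs : ∀ T : Finset UGraph, ∑ H ∈ T, μ H ≤ 1 := by
    intro T
    have htend : Tendsto (fun k => ∑ H ∈ T,
        pSampleLaw (G (φ k)) (r / Real.sqrt (2 * ((G (φ k)).e : ℝ))) H) atTop
        (nhds (∑ H ∈ T, μ H)) := tendsto_finset_sum T (fun H _ => hfin H)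
    refine le_of_tendsto htend ?_
    filter_upwards with k
    exact law_finsum_le_one _ _ (div_nonneg hr.le (Real.sqrt_nonneg _)) T
  have hsummable : Summable μ := summable_of_sum_le hμ0 hfs
  have htsum_le : (∑' H : UGraph, μ H) ≤ 1 := Summable.tsum_le_of_sum_le hsummable hfs
  have htsum_ge : ∀ ε : ℝ, 0 < ε → 1 - ε < (∑' H : UGraph, μ H) := by
    intro ε hε
    obtain ⟨M, hM⟩ := arch (r * D + r ^ 2) ε (by positivity) hε
    set N : ℕ := M + 1 with hN
    have hNpos : 0 < N := Nat.succ_pos M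
    have hNeq : ((N : ℝ)) = (M : ℝ) + 1 := by exact_mod_cast rfl
    have hlow : ∀ᶠ k in atTop, 1 - (r * D + r ^ 2) / N ≤ ∑ H ∈ (bigSet_finite N).toFinset,
        pSampleLaw (G (φ k)) (r / Real.sqrt (2 * ((G (φ k)).e : ℝ))) H := by
      filter_upwards [hee1] with k hk
      exact tight2 (G (φ k)) C r (hC (φ k)) hk hr N hNpos
    have htend : Tendsto (fun k => ∑ H ∈ (bigSet_finite N).toFinset,
        pSampleLaw (G (φ k)) (r / Real.sqrt (2 * ((G (φ k)).e : ℝ))) H) atTop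
        (nhds (∑ H ∈ (bigSet_finite N).toFinset, μ H)) :=
      tendsto_finset_sum _ (fun H _ => hfin H)
    have hsumge : 1 - (r * D + r ^ 2) / N ≤ ∑ H ∈ (bigSet_finite N).toFinset, μ H :=
      ge_of_tendsto htend hlow
    have hsum_le_tsum : ∑ H ∈ (bigSet_finite N).toFinset, μ H ≤ ∑' H : UGraph, μ H :=
      Summable.sum_le_tsum _ (fun H _ => hμ0 H) hsummable
    have hsmall : (r * D + r ^ 2) / N < ε := by
      rw [hNeq]
      exact hM M le_rfl
    linarith
  have htsum : (∑' H : UGraph, μ H) = 1 := by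
    by_contra hne
    have hlt : (∑' H : UGraph, μ H) < 1 := lt_of_le_of_ne htsum_le hne
    have := htsum_ge ((1 - ∑' H : UGraph, μ H) / 2) (by linarith)
    linarith
  exact ⟨μ, hμ0, htsum, hfin⟩
end
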